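/- arXiv:1908.09323 — 4 statements merged into one kernel-verified Lean document; each statement's English description precedes it below -/
import Mathlib

section
/- Consider the control affine system ẋ = f(x) + g(x)u on an open set D ⊆ ℝⁿ with f, g continuous, h : D → ℝ continuously differentiable, μ : ℝ → ℝ continuous, input constraints U(x) = {u ∈ ℝ^m : A(x)u ≤ b(x) componentwise} with A : D → ℝ^{q×m} and b : D → ℝ^q continuous, and K(x) = {u ∈ U(x) : L_f h(x) + L_g h(x)·u ≥ −μ(h(x))}. Assume ⋃_{x∈D} U(x) is compact, k_nom : D → ℝ^m is continuous, and the strict interior K_I(x) = {u : A(x)u < b(x) componentwise and L_f h(x) + L_g h(x)·u > −μ(h(x))} is nonempty for every x ∈ D. Then for each x ∈ D the problem min_{u ∈ K(x)} ‖u − k_nom(x)‖² has a unique minimizer k̂(x), and the resulting function k̂ : D → ℝ^m is continuous. -/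
open Filter Topology

lemma proj_strong_ineq {E : Type*} [NormedAddCommGroup E] [InnerProductSpace ℝ E]
    {K : Set E} (hconv : Convex ℝ K) {y v : E} (hv : v ∈ K)
    (hmin : ∀ w ∈ K, ‖v - y‖ ≤ ‖w - y‖) :
    ∀ w ∈ K, ‖v - y‖ ^ 2 + ‖w - v‖ ^ 2 ≤ ‖w - y‖ ^ 2 := by
  intro w hw
  have key : (0:ℝ) ≤ inner ℝ (v - y) (w - v) := by
    by_contra hI
    push_neg at hI
    set I : ℝ := inner ℝ (v - y) (w - v) with hIdef
    have hstep : ∀ t : ℝ, 0 < t → t ≤ 1 → 0 ≤ 2 * I + t * ‖w - v‖ ^ 2 := by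
      intro t ht ht1
      have hz : v + t • (w - v) ∈ K := by
        have h2 := hconv hv hw (by linarith : (0:ℝ) ≤ 1 - t) ht.le (by ring)
        convert h2 using 1
        module
      have h1 : ‖v - y‖ ≤ ‖v + t • (w - v) - y‖ := hmin _ hz
      have h2 : ‖v + t • (w - v) - y‖ ^ 2
          = ‖v - y‖ ^ 2 + 2 * (t * I) + t ^ 2 * ‖w - v‖ ^ 2 := by
        have he : v + t • (w - v) - y = (v - y) + t • (w - v) := by abel
        rw [he, norm_add_sq_real, real_inner_smul_right, norm_smul]
        rw [Real.norm_eq_abs, abs_of_pos ht]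
        rw [hIdef]
        ring_nf
      have h3 : ‖v - y‖ ^ 2 ≤ ‖v + t • (w - v) - y‖ ^ 2 :=
        pow_le_pow_left₀ (norm_nonneg _) h1 2
      nlinarith [h3, h2, ht]
    rcases eq_or_lt_of_le (sq_nonneg ‖w - v‖) with hc | hc
    · have := hstep 1 one_pos le_rfl
      nlinarith
    · set c : ℝ := ‖w - v‖ ^ 2 with hcdef
      have ht0 : 0 < min 1 (-I / c) := lt_min one_pos (div_pos (by linarith) hc)
      have ht1 : min 1 (-I / c) ≤ 1 := min_le_left _ _
      have htc : min 1 (-I / c) * c ≤ -I := by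
        have h4 : min 1 (-I / c) ≤ -I / c := min_le_right _ _
        calc min 1 (-I / c) * c ≤ (-I / c) * c := mul_le_mul_of_nonneg_right h4 hc.le
          _ = -I := div_mul_cancel₀ _ (ne_of_gt hc)
      have := hstep _ ht0 ht1
      nlinarith
  have hfin : ‖w - y‖ ^ 2 = ‖w - v‖ ^ 2 + 2 * inner ℝ (w - v) (v - y) + ‖v - y‖ ^ 2 := by
    have he : w - y = (w - v) + (v - y) := by abel
    rw [he, norm_add_sq_real]
  rw [real_inner_comm] at hfin
  linarith

set_option maxHeartbeats 2000000 in
/-- Theorem 5: under compactness of `⋃_{x ∈ D} U(x)`, continuity of `k_nom`,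
and nonemptiness of the strict interior `K_I(x)` of the viable control set
`K(x) = {u : A(x)u ≤ b(x), L_f h(x) + L_g h(x)·u ≥ −μ(h(x))}` for each `x ∈ D`, the QP
`min_{u ∈ K(x)} ‖u − k_nom(x)‖²` has a unique minimizer `k̂(x)` for each `x ∈ D`, and the
resulting controller `k̂` is continuous. -/
theorem qp_controller_unique_and_continuous
    {n m q : ℕ} (D : Set (EuclideanSpace ℝ (Fin n))) (hD : IsOpen D)
    (f : EuclideanSpace ℝ (Fin n) → EuclideanSpace ℝ (Fin n)) (hf : ContinuousOn f D)
    (g : EuclideanSpace ℝ (Fin n) →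
      (EuclideanSpace ℝ (Fin m) →L[ℝ] EuclideanSpace ℝ (Fin n))) (hg : ContinuousOn g D)
    (h : EuclideanSpace ℝ (Fin n) → ℝ) (hh : ContDiffOn ℝ 1 h D)
    (μ : ℝ → ℝ) (hμ : Continuous μ)
    (A : EuclideanSpace ℝ (Fin n) → Matrix (Fin q) (Fin m) ℝ) (hA : ContinuousOn A D)
    (b : EuclideanSpace ℝ (Fin n) → Fin q → ℝ) (hb : ContinuousOn b D)
    (K : EuclideanSpace ℝ (Fin n) → Set (EuclideanSpace ℝ (Fin m)))
    (hK : ∀ x, K x = {u | (∀ i : Fin q, ∑ j : Fin m, A x i j * u j ≤ b x i) ∧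
      -μ (h x) ≤ fderiv ℝ h x (f x) + fderiv ℝ h x (g x u)})
    (hUcompact : IsCompact (⋃ x ∈ D,
      {u : EuclideanSpace ℝ (Fin m) | ∀ i : Fin q, ∑ j : Fin m, A x i j * u j ≤ b x i}))
    (knom : EuclideanSpace ℝ (Fin n) → EuclideanSpace ℝ (Fin m))
    (hknom : ContinuousOn knom D)
    (hKI : ∀ x ∈ D, ∃ u : EuclideanSpace ℝ (Fin m),
      (∀ i : Fin q, ∑ j : Fin m, A x i j * u j < b x i) ∧
      -μ (h x) < fderiv ℝ h x (f x) + fderiv ℝ h x (g x u)) :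
    ∃ khat : EuclideanSpace ℝ (Fin n) → EuclideanSpace ℝ (Fin m),
      ContinuousOn khat D ∧
      ∀ x ∈ D, khat x ∈ K x ∧
        (∀ u ∈ K x, ‖khat x - knom x‖ ^ 2 ≤ ‖u - knom x‖ ^ 2) ∧
        (∀ u ∈ K x, ‖u - knom x‖ ^ 2 ≤ ‖khat x - knom x‖ ^ 2 → u = khat x) := by
  classical
  -- the compact container
  set C : Set (EuclideanSpace ℝ (Fin m)) := ⋃ x ∈ D,
      {u : EuclideanSpace ℝ (Fin m) | ∀ i : Fin q, ∑ j : Fin m, A x i j * u j ≤ b x i}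
    with hCdef
  have hKsub : ∀ x ∈ D, K x ⊆ C := by
    intro x hx u hu
    rw [hK x] at hu
    exact Set.mem_biUnion hx hu.1
  have hKclosed : ∀ x, IsClosed (K x) := by
    intro x
    rw [hK x]
    have h1 : IsClosed {u : EuclideanSpace ℝ (Fin m) |
        ∀ i : Fin q, ∑ j : Fin m, A x i j * u j ≤ b x i} := by
      have : {u : EuclideanSpace ℝ (Fin m) | ∀ i : Fin q, ∑ j : Fin m, A x i j * u j ≤ b x i}
          = ⋂ i : Fin q, {u | ∑ j : Fin m, A x i j * u j ≤ b x i} := by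
        ext u; simp [Set.mem_iInter]
      rw [this]
      refine isClosed_iInter fun i => isClosed_le ?_ continuous_const
      exact continuous_finset_sum _ fun j _ => continuous_const.mul
        ((EuclideanSpace.proj j : EuclideanSpace ℝ (Fin m) →L[ℝ] ℝ).continuous)
    have h2 : IsClosed {u : EuclideanSpace ℝ (Fin m) |
        -μ (h x) ≤ fderiv ℝ h x (f x) + fderiv ℝ h x (g x u)} :=
      isClosed_le continuous_const (continuous_const.add
        (((fderiv ℝ h x).comp (g x)).continuous))
    exact (h1.inter h2 : _)
  have hKconv : ∀ x, Convex ℝ (K x) := by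
    intro x
    rw [hK x]
    intro u hu v hv a c ha hc hac
    constructor
    · intro i
      have hsum : ∑ j : Fin m, A x i j * (a • u + c • v) j
          = a * ∑ j : Fin m, A x i j * u j + c * ∑ j : Fin m, A x i j * v j := by
        rw [Finset.mul_sum, Finset.mul_sum, ← Finset.sum_add_distrib]
        refine Finset.sum_congr rfl fun j _ => ?_
        simp [PiLp.add_apply, PiLp.smul_apply, smul_eq_mul]
        ring
      rw [hsum]
      have h1 := hu.1 i
      have h2 := hv.1 i
      calc a * ∑ j : Fin m, A x i j * u j + c * ∑ j : Fin m, A x i j * v j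
          ≤ a * b x i + c * b x i :=
            add_le_add (mul_le_mul_of_nonneg_left h1 ha) (mul_le_mul_of_nonneg_left h2 hc)
        _ = b x i := by rw [← add_mul, hac, one_mul]
    · have hlin : fderiv ℝ h x (g x (a • u + c • v))
          = a * fderiv ℝ h x (g x u) + c * fderiv ℝ h x (g x v) := by
        rw [map_add, map_smul, map_smul, map_add, map_smul, map_smul]
        simp [smul_eq_mul]
      have h1 := hu.2
      have h2 := hv.2
      rw [hlin]
      calc -μ (h x) = a * (-μ (h x)) + c * (-μ (h x)) := by rw [← add_mul, hac, one_mul]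
        _ ≤ a * (fderiv ℝ h x (f x) + fderiv ℝ h x (g x u))
            + c * (fderiv ℝ h x (f x) + fderiv ℝ h x (g x v)) :=
            add_le_add (mul_le_mul_of_nonneg_left h1 ha) (mul_le_mul_of_nonneg_left h2 hc)
        _ = fderiv ℝ h x (f x) + (a * fderiv ℝ h x (g x u) + c * fderiv ℝ h x (g x v)) := by
            linear_combination (fderiv ℝ h x (f x)) * hac
  have hKne : ∀ x ∈ D, (K x).Nonempty := by
    intro x hx
    obtain ⟨u, hu1, hu2⟩ := hKI x hx
    exact ⟨u, by rw [hK x]; exact ⟨fun i => (hu1 i).le, hu2.le⟩⟩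
  have hKcompact : ∀ x ∈ D, IsCompact (K x) := fun x hx =>
    hUcompact.of_isClosed_subset (hKclosed x) (hKsub x hx)
  have hexists : ∀ x, x ∈ D → ∃ v, v ∈ K x ∧ ∀ w ∈ K x, ‖v - knom x‖ ≤ ‖w - knom x‖ := by
    intro x hx
    obtain ⟨v, hv, hmin⟩ := (hKcompact x hx).exists_isMinOn (hKne x hx)
      ((continuous_id.sub continuous_const).norm.continuousOn :
        ContinuousOn (fun u : EuclideanSpace ℝ (Fin m) => ‖u - knom x‖) (K x))
    exact ⟨v, hv, fun w hw => hmin hw⟩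
  set khat : EuclideanSpace ℝ (Fin n) → EuclideanSpace ℝ (Fin m) :=
    fun x => if hx : x ∈ D then (hexists x hx).choose else 0 with hkhatdef
  have hkP : ∀ x (hx : x ∈ D), khat x ∈ K x ∧
      ∀ w ∈ K x, ‖khat x - knom x‖ ≤ ‖w - knom x‖ := by
    intro x hx
    simp only [hkhatdef, dif_pos hx]
    exact (hexists x hx).choose_spec
  refine ⟨khat, ?_, ?_⟩
  · -- continuity
    have hfd : ContinuousOn (fun x => fderiv ℝ h x) D :=
      hh.continuousOn_fderiv_of_isOpen hD le_rfl
    have hmapsTo : Set.MapsTo (Prod.fst :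
        (EuclideanSpace ℝ (Fin n)) × (EuclideanSpace ℝ (Fin m)) → EuclideanSpace ℝ (Fin n))
        (D ×ˢ (Set.univ : Set (EuclideanSpace ℝ (Fin m)))) D := fun p hp => hp.1
    have hfd' : ContinuousOn
        (fun pr : (EuclideanSpace ℝ (Fin n)) × (EuclideanSpace ℝ (Fin m)) => fderiv ℝ h pr.1)
        (D ×ˢ (Set.univ : Set (EuclideanSpace ℝ (Fin m)))) := hfd.comp continuousOn_fst hmapsTo
    have contPhi : ContinuousOn
        (fun pr : (EuclideanSpace ℝ (Fin n)) × (EuclideanSpace ℝ (Fin m)) =>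
          fderiv ℝ h pr.1 (f pr.1) + fderiv ℝ h pr.1 (g pr.1 pr.2))
        (D ×ˢ (Set.univ : Set (EuclideanSpace ℝ (Fin m)))) :=
      (hfd'.clm_apply (hf.comp continuousOn_fst hmapsTo)).add
        (hfd'.clm_apply ((hg.comp continuousOn_fst hmapsTo).clm_apply
          continuous_snd.continuousOn))
    have contLin : ∀ i : Fin q, ContinuousOn
        (fun pr : (EuclideanSpace ℝ (Fin n)) × (EuclideanSpace ℝ (Fin m)) =>
          ∑ j : Fin m, A pr.1 i j * pr.2 j)
        (D ×ˢ (Set.univ : Set (EuclideanSpace ℝ (Fin m)))) := by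
      intro i
      refine continuousOn_finset_sum _ fun j _ => ContinuousOn.mul ?_ ?_
      · exact ((continuous_apply j).comp (continuous_apply i)).comp_continuousOn
          (hA.comp continuousOn_fst hmapsTo)
      · exact ((EuclideanSpace.proj j :
          EuclideanSpace ℝ (Fin m) →L[ℝ] ℝ).continuous.comp continuous_snd).continuousOn
    have contmu : ContinuousOn (fun x => -μ (h x)) D :=
      (hμ.comp_continuousOn hh.continuousOn).neg
    intro x₀ hx₀
    obtain ⟨hmem₀, hmin₀⟩ := hkP x₀ hx₀
    set p := khat x₀ with hpdef
    set y₀ := knom x₀ with hy₀def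
    set d₀ := ‖p - y₀‖ with hd₀def
    -- Slater approximation: nearby feasible points close to p
    have hB : ∀ δ : ℝ, 0 < δ → ∀ᶠ x in 𝓝[D] x₀, ∃ v ∈ K x, ‖v - p‖ ≤ δ := by
      intro δ hδ
      obtain ⟨s, hs1, hs2⟩ := hKI x₀ hx₀
      set t : ℝ := min 1 (δ / (‖s - p‖ + 1)) with htdef
      have hsp : (0:ℝ) < ‖s - p‖ + 1 := by positivity
      have ht0 : 0 < t := lt_min one_pos (div_pos hδ hsp)
      have ht1 : t ≤ 1 := min_le_left _ _
      have htδ : t * ‖s - p‖ ≤ δ := by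
        have h4 : t ≤ δ / (‖s - p‖ + 1) := min_le_right _ _
        have h6 := mul_le_mul_of_nonneg_right h4 (norm_nonneg (s - p))
        have h5 : δ / (‖s - p‖ + 1) * ‖s - p‖ ≤ δ := by
          rw [div_mul_eq_mul_div, div_le_iff₀ hsp]
          nlinarith [norm_nonneg (s - p)]
        linarith
      set v := p + t • (s - p) with hvdef
      have hvp : ‖v - p‖ ≤ δ := by
        have he : v - p = t • (s - p) := by rw [hvdef]; abel
        rw [he, norm_smul, Real.norm_eq_abs, abs_of_pos ht0]
        exact htδ
      have hmem0 : (∀ i : Fin q, ∑ j : Fin m, A x₀ i j * p j ≤ b x₀ i) ∧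
          -μ (h x₀) ≤ fderiv ℝ h x₀ (f x₀) + fderiv ℝ h x₀ (g x₀ p) := by
        have := hmem₀; rw [hK x₀] at this; exact this
      have hvj : ∀ j : Fin m, v j = (1 - t) * p j + t * s j := by
        intro j
        simp only [hvdef, PiLp.add_apply, PiLp.smul_apply, PiLp.sub_apply, smul_eq_mul]
        ring
      have hstrict1 : ∀ i : Fin q, ∑ j : Fin m, A x₀ i j * v j < b x₀ i := by
        intro i
        have hsum : ∑ j : Fin m, A x₀ i j * v j
            = (1 - t) * ∑ j : Fin m, A x₀ i j * p j + t * ∑ j : Fin m, A x₀ i j * s j := by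
          rw [Finset.mul_sum, Finset.mul_sum, ← Finset.sum_add_distrib]
          refine Finset.sum_congr rfl fun j _ => ?_
          rw [hvj j]; ring
        rw [hsum]
        have h1 := hmem0.1 i
        have h2 := hs1 i
        calc (1 - t) * ∑ j : Fin m, A x₀ i j * p j + t * ∑ j : Fin m, A x₀ i j * s j
            ≤ (1 - t) * b x₀ i + t * ∑ j : Fin m, A x₀ i j * s j :=
              add_le_add_left (mul_le_mul_of_nonneg_left h1 (by linarith)) _
          _ < (1 - t) * b x₀ i + t * b x₀ i :=
              add_lt_add_right (mul_lt_mul_of_pos_left h2 ht0) _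
          _ = b x₀ i := by ring
      have hgl : fderiv ℝ h x₀ (g x₀ v)
          = (1 - t) * fderiv ℝ h x₀ (g x₀ p) + t * fderiv ℝ h x₀ (g x₀ s) := by
        have he : v = (1 - t) • p + t • s := by rw [hvdef]; module
        rw [he, map_add, map_smul, map_smul, map_add, map_smul, map_smul]
        simp [smul_eq_mul]
      have hstrict2 : -μ (h x₀) < fderiv ℝ h x₀ (f x₀) + fderiv ℝ h x₀ (g x₀ v) := by
        rw [hgl]
        have h1 := hmem0.2
        calc -μ (h x₀) = (1 - t) * (-μ (h x₀)) + t * (-μ (h x₀)) := by ring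
          _ ≤ (1 - t) * (fderiv ℝ h x₀ (f x₀) + fderiv ℝ h x₀ (g x₀ p)) + t * (-μ (h x₀)) :=
              add_le_add_left (mul_le_mul_of_nonneg_left h1 (by linarith)) _
          _ < (1 - t) * (fderiv ℝ h x₀ (f x₀) + fderiv ℝ h x₀ (g x₀ p))
              + t * (fderiv ℝ h x₀ (f x₀) + fderiv ℝ h x₀ (g x₀ s)) :=
              add_lt_add_right (mul_lt_mul_of_pos_left hs2 ht0) _
          _ = fderiv ℝ h x₀ (f x₀)
              + ((1 - t) * fderiv ℝ h x₀ (g x₀ p) + t * fderiv ℝ h x₀ (g x₀ s)) := by ring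
      -- openness in x of the strict inequalities at the fixed point v
      have e1 : ∀ i : Fin q, ∀ᶠ x in 𝓝[D] x₀, ∑ j : Fin m, A x i j * v j < b x i := by
        intro i
        have hc1 : ContinuousWithinAt
            (fun x => b x i - ∑ j : Fin m, A x i j * v j) D x₀ := by
          refine ContinuousWithinAt.sub (((continuous_apply i).comp_continuousOn hb) x₀ hx₀) ?_
          exact (continuousOn_finset_sum _ fun j _ =>
            (((continuous_apply j).comp (continuous_apply i)).comp_continuousOn hA).mul
              continuousOn_const) x₀ hx₀
        have hpos : (0:ℝ) < b x₀ i - ∑ j : Fin m, A x₀ i j * v j := by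
          have := hstrict1 i; linarith
        exact (hc1.eventually_const_lt hpos).mono fun x hx => by linarith
      have e2 : ∀ᶠ x in 𝓝[D] x₀,
          -μ (h x) < fderiv ℝ h x (f x) + fderiv ℝ h x (g x v) := by
        have hc2 : ContinuousWithinAt
            (fun x => (fderiv ℝ h x (f x) + fderiv ℝ h x (g x v)) - (-μ (h x))) D x₀ := by
          refine ContinuousWithinAt.sub ?_ (contmu x₀ hx₀)
          exact ((hfd.clm_apply hf).add
            (hfd.clm_apply (hg.clm_apply continuousOn_const))) x₀ hx₀
        have hpos : (0:ℝ) <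
            (fderiv ℝ h x₀ (f x₀) + fderiv ℝ h x₀ (g x₀ v)) - (-μ (h x₀)) := by linarith
        exact (hc2.eventually_const_lt hpos).mono fun x hx => by linarith
      filter_upwards [eventually_all.2 e1, e2] with x hx1 hx2
      exact ⟨v, by rw [hK x]; exact ⟨fun i => (hx1 i).le, hx2.le⟩, hvp⟩
    -- eventual near-optimality bound
    have hC : ∀ δ : ℝ, 0 < δ → ∀ᶠ x in 𝓝[D] x₀,
        x ∈ D ∧ ‖khat x - knom x‖ ≤ d₀ + δ := by
      intro δ hδ
      have h1 := hB (δ/2) (by linarith)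
      have h2 : ∀ᶠ x in 𝓝[D] x₀, ‖knom x - y₀‖ ≤ δ/2 := by
        have h3 := Metric.tendsto_nhds.mp (hknom x₀ hx₀) (δ/2) (by linarith)
        exact h3.mono fun x hx => by rw [← dist_eq_norm]; exact hx.le
      filter_upwards [h1, h2, eventually_mem_nhdsWithin] with x hx1 hx2 hxD
      obtain ⟨v, hvK, hvp⟩ := hx1
      refine ⟨hxD, ?_⟩
      calc ‖khat x - knom x‖ ≤ ‖v - knom x‖ := (hkP x hxD).2 v hvK
        _ = dist v (knom x) := (dist_eq_norm _ _).symm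
        _ ≤ dist v p + dist p y₀ + dist y₀ (knom x) := dist_triangle4 _ _ _ _
        _ = ‖v - p‖ + d₀ + ‖knom x - y₀‖ := by
            rw [dist_eq_norm, dist_eq_norm, dist_eq_norm, norm_sub_rev y₀]
        _ ≤ δ/2 + d₀ + δ/2 := by linarith
        _ = d₀ + δ := by ring
    -- sequential argument
    have : Tendsto khat (𝓝[D] x₀) (𝓝 p) := by
      rw [tendsto_iff_seq_tendsto]
      intro xs hxs
      by_contra hcon
      rw [Metric.tendsto_atTop] at hcon
      push_neg at hcon
      obtain ⟨ε, hε, hfreq⟩ := hcon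
      obtain ⟨φ, hφmono, hφP⟩ := Nat.exists_strictMono_subsequence (P := fun k =>
          ε ≤ dist ((khat ∘ xs) k) p) (fun N => by
        obtain ⟨n₁, hn₁, hd₁⟩ := hfreq (N+1)
        exact ⟨n₁, by omega, hd₁⟩)
      have hys : Tendsto (fun k => xs (φ k)) atTop (𝓝[D] x₀) := hxs.comp hφmono.tendsto_atTop
      obtain ⟨N, hN⟩ := eventually_atTop.mp (hys.eventually eventually_mem_nhdsWithin)
      have hmemC : ∀ k : ℕ, khat (xs (φ (k + N))) ∈ C := by
        intro k
        have hD' : xs (φ (k + N)) ∈ D := hN _ (by omega)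
        exact hKsub _ hD' (hkP _ hD').1
      obtain ⟨w, hwC, ψ, hψmono, hψtend⟩ := hUcompact.tendsto_subseq hmemC
      set ts : ℕ → EuclideanSpace ℝ (Fin n) := fun k => xs (φ (ψ k + N)) with htsdef
      have htsD : ∀ k, ts k ∈ D := fun k => hN _ (by omega)
      have hts : Tendsto ts atTop (𝓝[D] x₀) :=
        hys.comp (tendsto_atTop_mono (fun k => Nat.le_add_right _ _) hψmono.tendsto_atTop)
      have hwtend : Tendsto (fun k => khat (ts k)) atTop (𝓝 w) := hψtend
      have hpair : Tendsto (fun k => (ts k, khat (ts k))) atTop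
          (𝓝[D ×ˢ (Set.univ : Set (EuclideanSpace ℝ (Fin m)))] (x₀, w)) := by
        rw [tendsto_nhdsWithin_iff]
        exact ⟨(hts.mono_right nhdsWithin_le_nhds).prodMk_nhds hwtend,
          Eventually.of_forall fun k => ⟨htsD k, trivial⟩⟩
      have hwK : w ∈ K x₀ := by
        rw [hK x₀]
        constructor
        · intro i
          refine le_of_tendsto_of_tendsto' (Filter.Tendsto.comp (contLin i (x₀, w) ⟨hx₀, trivial⟩) hpair)
            (Filter.Tendsto.comp (((continuous_apply i).comp_continuousOn hb) x₀ hx₀) hts) (fun k => ?_)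
          have hm := (hkP (ts k) (htsD k)).1
          rw [hK (ts k)] at hm
          exact hm.1 i
        · refine le_of_tendsto_of_tendsto' (Filter.Tendsto.comp (contmu x₀ hx₀) hts)
            (Filter.Tendsto.comp (contPhi (x₀, w) ⟨hx₀, trivial⟩) hpair) (fun k => ?_)
          have hm := (hkP (ts k) (htsD k)).1
          rw [hK (ts k)] at hm
          exact hm.2
      have hknomts : Tendsto (fun k => knom (ts k)) atTop (𝓝 y₀) := Filter.Tendsto.comp (hknom x₀ hx₀) hts
      have hwd : ‖w - y₀‖ ≤ d₀ := by
        by_contra hcon2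
        push_neg at hcon2
        set δ := (‖w - y₀‖ - d₀)/2 with hδdef
        have hδ : 0 < δ := by simp only [hδdef]; linarith
        have hev := hts.eventually (hC δ hδ)
        have hlim : Tendsto (fun k => ‖khat (ts k) - knom (ts k)‖) atTop (𝓝 ‖w - y₀‖) :=
          (hwtend.sub hknomts).norm
        have hle := le_of_tendsto hlim (hev.mono fun k hk => hk.2)
        simp only [hδdef] at hle
        linarith
      have hw_eq : w = p := by
        have hstrong := proj_strong_ineq (hKconv x₀) hmem₀ hmin₀ w hwK
        have h4 : ‖w - y₀‖ ^ 2 ≤ d₀ ^ 2 := pow_le_pow_left₀ (norm_nonneg _) hwd 2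
        have h0 : ‖w - p‖ = 0 := by nlinarith [norm_nonneg (w - p)]
        exact sub_eq_zero.mp (norm_eq_zero.mp h0)
      have hdist0 : Tendsto (fun k => dist (khat (ts k)) p) atTop (𝓝 0) := by
        have h7 : Tendsto (fun k => khat (ts k)) atTop (𝓝 p) := hw_eq ▸ hwtend
        exact tendsto_iff_dist_tendsto_zero.mp h7
      have hεle : ε ≤ (0:ℝ) :=
        ge_of_tendsto hdist0 (Eventually.of_forall fun k => hφP (ψ k + N))
      linarith
    exact this
  · intro x hx
    obtain ⟨hmem, hmin⟩ := hkP x hx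
    refine ⟨hmem, fun u hu => pow_le_pow_left₀ (norm_nonneg _) (hmin u hu) 2, ?_⟩
    intro u hu hle
    have hstrong := proj_strong_ineq (hKconv x) hmem hmin u hu
    have : ‖u - khat x‖ ^ 2 ≤ 0 := by linarith
    have h0 : ‖u - khat x‖ = 0 := by nlinarith [norm_nonneg (u - khat x)]
    have := norm_eq_zero.mp h0
    exact sub_eq_zero.mp this
end

section
/- Consider the time-varying system ẋ = f(t,x) on [0,∞) × D with D ⊆ ℝⁿ open and f : [0,∞) × D → ℝⁿ continuous, and let h : [0,∞) × D → ℝ be continuously differentiable with S_t = {x ∈ D : h(t,x) ≥ 0} nonempty for all t ≥ 0. Suppose there exists a continuous μ : [0,∞) × ℝ → ℝ such that (i) for every t₀ ≥ 0 and every differentiable w : [t₀,τ) → ℝ with w(t₀) = 0 and ẇ(t) = −μ(t, w(t)) for all t ∈ [t₀,τ), one has w(t) ≥ 0 for all t ∈ [t₀,τ); and (ii) ∂h/∂t(t,x) + ∇_x h(t,x)·f(t,x) ≥ −μ(t, h(t,x)) for all (t,x) ∈ [0,∞) × D. Then for every t₀ ≥ 0, every differentiable solution x : [t₀,τ) → D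 of ẋ(t) = f(t, x(t)) with x(t₀) ∈ S_{t₀} satisfies x(t) ∈ S_t for all t ∈ [t₀,τ). -/
open Set Filter Topology

/-- If `φ < 0` on `[a,c)` and `φ c = 0`, any derivative of `φ` at `c` within `[a,c)` is `≥ 0`. -/
lemma deriv_nonneg_of_neg_before {φ : ℝ → ℝ} {a c d : ℝ} (hac : a < c)
    (hφ : HasDerivWithinAt φ d (Set.Ico a c) c)
    (hneg : ∀ t ∈ Set.Ico a c, φ t < 0) (hc : φ c = 0) : 0 ≤ d := by
  rw [hasDerivWithinAt_iff_tendsto_slope] at hφ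
  have hset : Set.Ico a c \ {c} = Set.Ico a c := by
    rw [Set.diff_singleton_eq_self]
    simp
  rw [hset] at hφ
  have hne : (𝓝[Set.Ico a c] c).NeBot := right_nhdsWithin_Ico_neBot hac
  refine ge_of_tendsto hφ (eventually_nhdsWithin_of_forall fun s hs => ?_)
  have h1 : φ s < 0 := hneg s hs
  have h2 : s - c < 0 := sub_neg.mpr hs.2
  have : slope φ c s = (φ s - φ c) / (s - c) := slope_def_field φ c s
  rw [this, hc, sub_zero]
  exact div_nonneg_of_nonpos h1.le h2.le

/-- Strict differential comparison ("no first crossing") lemma. -/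
lemma crossing_lt {a b : ℝ} {u z du dz : ℝ → ℝ}
    (hu : ∀ t ∈ Set.Icc a b, HasDerivWithinAt u (du t) (Set.Icc a b) t)
    (hz : ∀ t ∈ Set.Icc a b, HasDerivWithinAt z (dz t) (Set.Icc a b) t)
    (h0 : u a < z a)
    (hlt : ∀ t ∈ Set.Icc a b, u t = z t → du t < dz t) :
    ∀ t ∈ Set.Icc a b, u t < z t := by
  by_contra hcon
  push_neg at hcon
  obtain ⟨t, ht, htz⟩ := hcon
  have hab : a ≤ b := ht.1.trans ht.2
  set φ : ℝ → ℝ := fun s => u s - z s with hφdef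
  have hφcont : ContinuousOn φ (Set.Icc a b) := fun s hs =>
    ((hu s hs).sub (hz s hs)).continuousWithinAt
  set A : Set ℝ := Set.Icc a b ∩ φ ⁻¹' Set.Ici 0 with hAdef
  have hAne : A.Nonempty := ⟨t, ht, sub_nonneg.mpr htz⟩
  have hAbdd : BddBelow A := ⟨a, fun s hs => hs.1.1⟩
  have hAclosed : IsClosed A := hφcont.preimage_isClosed_of_isClosed isClosed_Icc isClosed_Ici
  set c := sInf A with hcdef
  have hcA : c ∈ A := hAclosed.csInf_mem hAne hAbdd
  have hca : a < c := by
    rcases eq_or_lt_of_le hcA.1.1 with h | h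
    · exfalso
      have : (0:ℝ) ≤ φ a := by rw [h]; exact hcA.2
      have : φ a < 0 := sub_neg.mpr h0
      linarith
    · exact h
  have hIcosub : Set.Ico a c ⊆ Set.Icc a b := fun s hs =>
    ⟨hs.1, hs.2.le.trans hcA.1.2⟩
  have hneg : ∀ s ∈ Set.Ico a c, φ s < 0 := by
    intro s hs
    by_contra hsn
    push_neg at hsn
    have hsA : s ∈ A := ⟨hIcosub hs, hsn⟩
    exact absurd (csInf_le hAbdd hsA) (not_le.mpr hs.2)
  have hφc_le : φ c ≤ 0 := by
    have hne : (𝓝[Set.Ico a c] c).NeBot := right_nhdsWithin_Ico_neBot hca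
    have htend : Filter.Tendsto φ (𝓝[Set.Ico a c] c) (𝓝 (φ c)) :=
      (hφcont c hcA.1).mono hIcosub
    exact le_of_tendsto htend (eventually_nhdsWithin_of_forall fun s hs => (hneg s hs).le)
  have hφc : φ c = 0 := le_antisymm hφc_le hcA.2
  have huz : u c = z c := sub_eq_zero.mp hφc
  have hder : HasDerivWithinAt φ (du c - dz c) (Set.Ico a c) c :=
    ((hu c hcA.1).sub (hz c hcA.1)).mono hIcosub
  have h1 : (0:ℝ) ≤ du c - dz c := deriv_nonneg_of_neg_before hca hder hneg hφc
  have h2 := hlt c hcA.1 huz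
  linarith

/-- A pointwise infimum of an equi-Lipschitz family is Lipschitz. -/
lemma lipschitzOnWith_iInf {L : NNReal} {f : ℕ → ℝ → ℝ} {s : Set ℝ}
    (hf : ∀ k, LipschitzOnWith L (f k) s)
    (hbdd : ∀ x ∈ s, BddBelow (Set.range fun k => f k x)) :
    LipschitzOnWith L (fun x => ⨅ k, f k x) s := by
  apply LipschitzOnWith.of_dist_le_mul
  have key : ∀ x' ∈ s, ∀ y' ∈ s, (⨅ k, f k x') ≤ (⨅ k, f k y') + L * dist x' y' := by
    intro x' hx' y' hy'
    rw [← sub_le_iff_le_add]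
    refine le_ciInf fun j => ?_
    rw [sub_le_iff_le_add]
    calc (⨅ k, f k x') ≤ f j x' := ciInf_le (hbdd x' hx') j
      _ ≤ f j y' + L * dist x' y' := by
          have h1 := (hf j).dist_le_mul x' hx' y' hy'
          rw [Real.dist_eq] at h1
          have h2 := (abs_le.mp h1).2
          linarith
  intro x hx y hy
  rw [Real.dist_eq, abs_le]
  constructor
  · have := key y hy x hx
    rw [dist_comm] at this
    linarith
  · have := key x hx y hy
    linarith

noncomputable def supConv (g : ℝ × ℝ → ℝ) (k : ℕ) (p : ℝ × ℝ) : ℝ :=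
  (⨆ z : ℝ, (g (p.1, z) - ((k : ℝ) + 1) * |p.2 - z|)) + (1/2)^k

section SupConv

variable {g : ℝ × ℝ → ℝ} {B : ℝ} (hB : ∀ p, |g p| ≤ B)

include hB

lemma supConv_bddAbove (k : ℕ) (τ y : ℝ) :
    BddAbove (Set.range fun z : ℝ => g (τ, z) - ((k : ℝ) + 1) * |y - z|) := by
  refine ⟨B, fun r hr => ?_⟩
  obtain ⟨z, rfl⟩ := hr
  dsimp only
  have h1 := (abs_le.mp (hB (τ, z))).2
  have h2 : (0:ℝ) ≤ ((k : ℝ) + 1) * |y - z| :=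
    mul_nonneg (by positivity) (abs_nonneg _)
  linarith

lemma le_supConv (k : ℕ) (p : ℝ × ℝ) : g p + (1/2)^k ≤ supConv g k p := by
  refine add_le_add_left ?_ _
  have := le_ciSup (supConv_bddAbove hB k p.1 p.2) p.2
  simpa using this

lemma supConv_le (k : ℕ) (p : ℝ × ℝ) : supConv g k p ≤ B + (1/2)^k := by
  refine add_le_add_left (ciSup_le fun z => ?_) _
  have h1 := (abs_le.mp (hB (p.1, z))).2
  have h2 : (0:ℝ) ≤ ((k : ℝ) + 1) * |p.2 - z| :=
    mul_nonneg (by positivity) (abs_nonneg _)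
  linarith

lemma supConv_succ_lt (k : ℕ) (p : ℝ × ℝ) : supConv g (k+1) p < supConv g k p := by
  have h1 : (⨆ z : ℝ, (g (p.1, z) - ((k : ℝ) + 1 + 1) * |p.2 - z|)) ≤
      (⨆ z : ℝ, (g (p.1, z) - ((k : ℝ) + 1) * |p.2 - z|)) := by
    refine ciSup_mono (supConv_bddAbove hB k p.1 p.2) fun z => ?_
    have : ((k : ℝ) + 1) * |p.2 - z| ≤ ((k : ℝ) + 1 + 1) * |p.2 - z| :=
      mul_le_mul_of_nonneg_right (by linarith) (abs_nonneg _)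
    linarith
  have h2 : ((1:ℝ)/2)^(k+1) < (1/2)^k :=
    pow_lt_pow_right_of_lt_one₀ (by norm_num) (by norm_num) (Nat.lt_succ_self k)
  unfold supConv
  push_cast
  push_cast at h1
  linarith

lemma supConv_le_of_close {k : ℕ} {τ τ' y y' ε : ℝ} (hε : 0 ≤ ε)
    (hτ : ∀ z, g (τ, z) ≤ g (τ', z) + ε) :
    supConv g k (τ, y) ≤ supConv g k (τ', y') + ε + ((k : ℝ) + 1) * |y - y'| := by
  have : (⨆ z : ℝ, (g (τ, z) - ((k : ℝ) + 1) * |y - z|)) ≤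
      (⨆ z : ℝ, (g (τ', z) - ((k : ℝ) + 1) * |y' - z|)) + ε + ((k : ℝ) + 1) * |y - y'| := by
    refine ciSup_le fun z => ?_
    have h1 : |y' - z| ≤ |y' - y| + |y - z| := abs_sub_le y' y z
    have h2 : |y' - y| = |y - y'| := abs_sub_comm y' y
    have h3 : g (τ', z) - ((k : ℝ) + 1) * |y' - z| ≤
        (⨆ z : ℝ, (g (τ', z) - ((k : ℝ) + 1) * |y' - z|)) :=
      le_ciSup (supConv_bddAbove hB k τ' y') z
    have h4 := hτ z
    have h5 : ((k : ℝ) + 1) * |y' - z| ≤ ((k : ℝ) + 1) * (|y - y'| + |y - z|) := by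
      refine mul_le_mul_of_nonneg_left ?_ (by positivity)
      rw [← h2]; linarith
    have h6 : ((k : ℝ) + 1) * (|y - y'| + |y - z|)
        = ((k : ℝ) + 1) * |y - y'| + ((k : ℝ) + 1) * |y - z| := by ring
    nlinarith [abs_nonneg (y - z), abs_nonneg (y - y')]
  unfold supConv
  linarith

end SupConv

section SupConv2

variable {g : ℝ × ℝ → ℝ} {B : ℝ} (hB : ∀ p, |g p| ≤ B)
  (hUC : ∀ ε > (0:ℝ), ∃ δ > (0:ℝ), ∀ p q : ℝ × ℝ, dist p q ≤ δ → |g p - g q| ≤ ε)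

include hB hUC

lemma supConv_continuous (k : ℕ) : Continuous (supConv g k) := by
  rw [continuous_iff_continuousAt]
  intro p₀
  rw [Metric.continuousAt_iff]
  intro ε hε
  obtain ⟨δ₁, hδ₁, hδ₁p⟩ := hUC (ε/4) (by linarith)
  have hk1 : (0:ℝ) < (k : ℝ) + 1 := by positivity
  refine ⟨min δ₁ (ε/(4*((k:ℝ)+1))), by positivity, fun {p} hp => ?_⟩
  have hfst : |p.1 - p₀.1| ≤ δ₁ := by
    have : dist p.1 p₀.1 ≤ dist p p₀ := by
      rw [Prod.dist_eq]; exact le_max_left _ _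
    rw [Real.dist_eq] at this
    exact this.trans (le_of_lt (lt_of_lt_of_le hp (min_le_left _ _)))
  have hsnd : |p.2 - p₀.2| ≤ ε/(4*((k:ℝ)+1)) := by
    have : dist p.2 p₀.2 ≤ dist p p₀ := by
      rw [Prod.dist_eq]; exact le_max_right _ _
    rw [Real.dist_eq] at this
    exact this.trans (le_of_lt (lt_of_lt_of_le hp (min_le_right _ _)))
  have hτ1 : ∀ z, g (p.1, z) ≤ g (p₀.1, z) + ε/4 := fun z => by
    have := hδ₁p (p.1, z) (p₀.1, z) (by
      rw [Prod.dist_eq]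
      simp [Real.dist_eq, hfst, abs_nonneg, hδ₁.le])
    have := (abs_le.mp this).2
    linarith
  have hτ2 : ∀ z, g (p₀.1, z) ≤ g (p.1, z) + ε/4 := fun z => by
    have := hδ₁p (p₀.1, z) (p.1, z) (by
      rw [Prod.dist_eq]
      simp [Real.dist_eq, abs_sub_comm p₀.1 p.1, hfst, hδ₁.le])
    have := (abs_le.mp this).2
    linarith
  have hpen1 : ((k:ℝ)+1) * |p.2 - p₀.2| ≤ ε/4 := by
    calc ((k:ℝ)+1) * |p.2 - p₀.2| ≤ ((k:ℝ)+1) * (ε/(4*((k:ℝ)+1))) :=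
          mul_le_mul_of_nonneg_left hsnd hk1.le
      _ = ε/4 := by field_simp
  have h1 : supConv g k p ≤ supConv g k p₀ + ε/4 + ((k:ℝ)+1) * |p.2 - p₀.2| := by
    have := supConv_le_of_close hB (ε := ε/4) (k := k) (y := p.2) (y' := p₀.2)
      (by linarith) hτ1
    simpa using this
  have h2 : supConv g k p₀ ≤ supConv g k p + ε/4 + ((k:ℝ)+1) * |p₀.2 - p.2| := by
    have := supConv_le_of_close hB (ε := ε/4) (k := k) (y := p₀.2) (y' := p.2)
      (by linarith) hτ2
    simpa using this
  rw [Real.dist_eq, abs_lt]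
  rw [abs_sub_comm p₀.2 p.2] at h2
  constructor <;> nlinarith

lemma supConv_close : ∀ ε > (0:ℝ), ∃ N : ℕ, ∀ k ≥ N, ∀ p, supConv g k p ≤ g p + ε := by
  intro ε hε
  obtain ⟨δ, hδ, hδp⟩ := hUC (ε/2) (by linarith)
  have hB0 : 0 ≤ B := le_trans (abs_nonneg _) (hB (0,0))
  obtain ⟨N₁, hN₁⟩ := exists_nat_ge (2*B/δ)
  obtain ⟨N₂, hN₂⟩ := exists_pow_lt_of_lt_one (show (0:ℝ) < ε/2 by linarith)
    (show (1:ℝ)/2 < 1 by norm_num)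
  refine ⟨max N₁ N₂, fun k hk p => ?_⟩
  have hkN₁ : (N₁ : ℝ) ≤ (k : ℝ) := Nat.cast_le.mpr (le_trans (le_max_left _ _) hk)
  have hkδ : 2*B ≤ ((k:ℝ)+1) * δ := by
    have : 2*B/δ ≤ (k:ℝ) := le_trans hN₁ hkN₁
    have h2 : 2*B ≤ (k:ℝ) * δ := by
      rw [div_le_iff₀ hδ] at this
      linarith
    nlinarith
  have hpow : ((1:ℝ)/2)^k ≤ ε/2 := by
    calc ((1:ℝ)/2)^k ≤ ((1:ℝ)/2)^N₂ :=
          pow_le_pow_of_le_one (by norm_num) (by norm_num)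
            (le_trans (le_max_right _ _) hk)
      _ ≤ ε/2 := hN₂.le
  have hsup : (⨆ z : ℝ, (g (p.1, z) - ((k : ℝ) + 1) * |p.2 - z|)) ≤ g p + ε/2 := by
    refine ciSup_le fun z => ?_
    by_cases hz : |p.2 - z| ≤ δ
    · have := hδp (p.1, z) p (by
        rw [Prod.dist_eq]
        simp [Real.dist_eq, abs_sub_comm z p.2, hz, hδ.le])
      have h2 := (abs_le.mp this).2
      have h3 : (0:ℝ) ≤ ((k:ℝ)+1) * |p.2 - z| := by positivity
      linarith
    · push_neg at hz
      have h1 := (abs_le.mp (hB (p.1, z))).2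
      have h2 := (abs_le.mp (hB p)).1
      have h3 : ((k:ℝ)+1) * δ ≤ ((k:ℝ)+1) * |p.2 - z| :=
        mul_le_mul_of_nonneg_left hz.le (by positivity)
      linarith
  unfold supConv
  linarith

end SupConv2

lemma scalar_comparison (μ : ℝ × ℝ → ℝ)
    (hμc : ContinuousOn μ (Set.Ici (0:ℝ) ×ˢ Set.univ))
    (hμmin : ∀ t₀ : ℝ, 0 ≤ t₀ → ∀ τ : ℝ, ∀ w : ℝ → ℝ, w t₀ = 0 →
      (∀ t ∈ Set.Ico t₀ τ, HasDerivAt w (-μ (t, w t)) t) →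
      ∀ t ∈ Set.Ico t₀ τ, 0 ≤ w t)
    {s t₁ : ℝ} (hs0 : 0 ≤ s) (hst : s ≤ t₁)
    {v dv : ℝ → ℝ}
    (hv : ∀ t ∈ Set.Icc s t₁, HasDerivWithinAt v (dv t) (Set.Icc s t₁) t)
    (hdv : ∀ t ∈ Set.Icc s t₁, -μ (t, v t) ≤ dv t)
    (hvs : 0 ≤ v s) : 0 ≤ v t₁ := by
  by_contra hvt₁
  push_neg at hvt₁
  have hst' : s < t₁ := by
    rcases eq_or_lt_of_le hst with h | h
    · exact absurd hvt₁ (not_lt.mpr (h ▸ hvs))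
    · exact h
  set T := t₁ - s with hTdef
  have hT : 0 < T := sub_pos.mpr hst'
  -- continuity and extrema of v
  have hvc : ContinuousOn v (Set.Icc s t₁) := fun t ht => (hv t ht).continuousWithinAt
  obtain ⟨tmin, htmin, hmin⟩ :=
    isCompact_Icc.exists_isMinOn (Set.nonempty_Icc.mpr hst) hvc
  obtain ⟨tmax, htmax, hmax⟩ :=
    isCompact_Icc.exists_isMaxOn (Set.nonempty_Icc.mpr hst) hvc
  set m := v tmin with hmdef
  set M := v tmax with hMdef
  have hmle : ∀ t ∈ Set.Icc s t₁, m ≤ v t := fun t ht => hmin ht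
  have hMge : ∀ t ∈ Set.Icc s t₁, v t ≤ M := fun t ht => hmax ht
  have hmM : m ≤ M := (hmle tmax htmax).trans (le_refl M)
  have hM0 : 0 ≤ M := hvs.trans (hMge s (Set.left_mem_Icc.mpr hst))
  have hm0 : m < 0 := lt_of_le_of_lt (hmle t₁ (Set.right_mem_Icc.mpr hst)) hvt₁
  -- clamping maps
  set π1 : ℝ → ℝ := fun r => t₁ - min T (max 0 r) with hπ1def
  set π2 : ℝ → ℝ := fun z => min (M+1) (max (m-1) z) with hπ2def
  have hπ1mem : ∀ r, π1 r ∈ Set.Icc s t₁ := by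
    intro r
    constructor
    · simp only [hπ1def]
      have : min T (max 0 r) ≤ T := min_le_left _ _
      simp only [hTdef] at this ⊢
      linarith
    · simp only [hπ1def]
      have : (0:ℝ) ≤ min T (max 0 r) := le_min hT.le (le_max_left _ _)
      linarith
  have hπ2mem : ∀ z, π2 z ∈ Set.Icc (m-1) (M+1) := by
    intro z
    constructor
    · exact le_min (by linarith) (le_max_left _ _)
    · exact min_le_left _ _
  have hπ1id : ∀ σ ∈ Set.Icc 0 T, π1 σ = t₁ - σ := by
    intro σ hσ
    simp only [hπ1def]
    rw [max_eq_right hσ.1, min_eq_right hσ.2]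
  have hπ2id : ∀ z ∈ Set.Icc (m-1) (M+1), π2 z = z := by
    intro z hz
    simp only [hπ2def]
    rw [max_eq_right hz.1, min_eq_right hz.2]
  have hπ1lip : ∀ a b₂ : ℝ, |π1 a - π1 b₂| ≤ |a - b₂| := by
    intro a b
    simp only [hπ1def]
    have h1 : t₁ - min T (max 0 a) - (t₁ - min T (max 0 b)) =
        min T (max 0 b) - min T (max 0 a) := by ring
    rw [h1]
    have := abs_min_sub_min_le_max (T) (max 0 a) T (max 0 b)
    calc |min T (max 0 b) - min T (max 0 a)| = |min T (max 0 a) - min T (max 0 b)| :=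
          abs_sub_comm _ _
      _ ≤ max |T - T| |max 0 a - max 0 b| := abs_min_sub_min_le_max _ _ _ _
      _ ≤ |a - b| := by
          rw [sub_self, abs_zero]
          refine max_le (abs_nonneg _) ?_
          calc |max 0 a - max 0 b| ≤ max |0-0| |a - b| := abs_max_sub_max_le_max _ _ _ _
            _ ≤ |a - b| := by rw [sub_self, abs_zero]; exact max_le (abs_nonneg _) le_rfl
  have hπ2lip : ∀ a b₂ : ℝ, |π2 a - π2 b₂| ≤ |a - b₂| := by
    intro a b
    simp only [hπ2def]
    calc |min (M+1) (max (m-1) a) - min (M+1) (max (m-1) b)|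
        ≤ max |M+1-(M+1)| |max (m-1) a - max (m-1) b| := abs_min_sub_min_le_max _ _ _ _
      _ ≤ |a - b| := by
          rw [sub_self, abs_zero]
          refine max_le (abs_nonneg _) ?_
          calc |max (m-1) a - max (m-1) b| ≤ max |m-1-(m-1)| |a - b| :=
                abs_max_sub_max_le_max _ _ _ _
            _ ≤ |a - b| := by rw [sub_self, abs_zero]; exact max_le (abs_nonneg _) le_rfl
  set Q : ℝ × ℝ → ℝ × ℝ := fun p => (π1 p.1, π2 p.2) with hQdef
  set g : ℝ × ℝ → ℝ := fun p => μ (Q p) with hgdef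
  have hπ1c : Continuous π1 := by
    simp only [hπ1def]
    exact continuous_const.sub (continuous_const.min (continuous_const.max continuous_id))
  have hπ2c : Continuous π2 := by
    simp only [hπ2def]
    exact continuous_const.min (continuous_const.max continuous_id)
  have hQc : Continuous Q := (hπ1c.comp continuous_fst).prodMk (hπ2c.comp continuous_snd)
  have hQmem : ∀ p, Q p ∈ Set.Icc s t₁ ×ˢ Set.Icc (m-1) (M+1) := fun p =>
    ⟨hπ1mem p.1, hπ2mem p.2⟩
  have hRsub : Set.Icc s t₁ ×ˢ Set.Icc (m-1) (M+1) ⊆ Set.Ici (0:ℝ) ×ˢ Set.univ := by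
    rintro ⟨a, b⟩ ⟨ha, _⟩
    exact ⟨hs0.trans ha.1, trivial⟩
  have hgc : Continuous g := by
    refine ContinuousOn.comp_continuous (hμc.mono hRsub) hQc fun p => hQmem p
  -- bound
  obtain ⟨B, hBbound⟩ := (isCompact_Icc.prod isCompact_Icc).exists_bound_of_continuousOn
    (hμc.mono hRsub)
  have hgB : ∀ p, |g p| ≤ B := by
    intro p
    have := hBbound (Q p) (hQmem p)
    rwa [Real.norm_eq_abs] at this
  have hB0 : 0 ≤ B := (abs_nonneg _).trans (hgB (0,0))
  -- uniform continuity
  have hgUC : ∀ ε > (0:ℝ), ∃ δ > (0:ℝ), ∀ p q : ℝ × ℝ, dist p q ≤ δ → |g p - g q| ≤ ε := by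
    intro ε hε
    have hUCμ := ((isCompact_Icc.prod isCompact_Icc)).uniformContinuousOn_of_continuous
      (hμc.mono hRsub)
    rw [Metric.uniformContinuousOn_iff] at hUCμ
    obtain ⟨δ, hδ, hδp⟩ := hUCμ ε hε
    refine ⟨δ/2, by linarith, fun p q hpq => ?_⟩
    have hQd : dist (Q p) (Q q) ≤ dist p q := by
      rw [Prod.dist_eq, Prod.dist_eq]
      refine max_le ?_ ?_
      · exact le_trans (by rw [Real.dist_eq, Real.dist_eq] at *; exact hπ1lip p.1 q.1)
          (le_max_left _ _)
      · exact le_trans (by rw [Real.dist_eq, Real.dist_eq] at *; exact hπ2lip p.2 q.2)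
          (le_max_right _ _)
    have := hδp (Q p) (hQmem p) (Q q) (hQmem q) (lt_of_le_of_lt (hQd.trans hpq) (by linarith))
    rw [Real.dist_eq] at this
    exact this.le
  -- Picard-Lindelöf solutions of the approximating equations
  have hPL : ∀ k : ℕ, ∃ y : ℝ → ℝ, y 0 = v t₁ + (1/2)^k ∧
      ∀ σ ∈ Set.Icc (0:ℝ) T, HasDerivWithinAt y (supConv g k (σ, y σ)) (Set.Icc 0 T) σ := by
    intro k
    have hpl : IsPicardLindelof (fun t x => supConv g k (t, x)) (tmin := 0) (tmax := T)
        ⟨0, Set.left_mem_Icc.mpr hT.le⟩ (v t₁ + (1/2)^k)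
        ((B+1)*T).toNNReal 0 (B+1).toNNReal ((k:ℝ)+1).toNNReal := by
      constructor
      · intro t ht
        refine (LipschitzWith.of_dist_le_mul fun a b => ?_).lipschitzOnWith
        rw [Real.dist_eq, Real.dist_eq, abs_le]
        have h1 := supConv_le_of_close hgB (k := k) (τ := t) (τ' := t) (y := a) (y' := b)
          le_rfl (fun z => by linarith)
        have h2 := supConv_le_of_close hgB (k := k) (τ := t) (τ' := t) (y := b) (y' := a)
          le_rfl (fun z => by linarith)
        rw [Real.coe_toNNReal _ (by positivity)]
        rw [abs_sub_comm b a] at h2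
        constructor <;> nlinarith [abs_nonneg (a - b)]
      · intro x _
        exact ((supConv_continuous hgB hgUC k).comp
          (continuous_id.prodMk continuous_const)).continuousOn
      · intro t _ x _
        rw [Real.coe_toNNReal _ (by linarith), Real.norm_eq_abs, abs_le]
        have h1 := supConv_le hgB k (t, x)
        have h2 := le_supConv hgB k (t, x)
        have h3 := (abs_le.mp (hgB (t, x))).1
        have h4 : (0:ℝ) < (1/2)^k := by positivity
        have h5 : ((1:ℝ)/2)^k ≤ 1 := pow_le_one₀ (by norm_num) (by norm_num)
        constructor <;> nlinarith
      · rw [Real.coe_toNNReal _ (by linarith), Real.coe_toNNReal _ (mul_nonneg (by linarith) hT.le)]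
        simp only [NNReal.coe_zero, sub_zero, sub_self, max_eq_left hT.le, le_refl]
    obtain ⟨y, hy0, hyd⟩ := hpl.exists_eq_forall_mem_Icc_hasDerivWithinAt₀
    exact ⟨y, hy0, hyd⟩
  choose y hy0 hyd using hPL
  -- the approximations decrease in k
  have hydec : ∀ k : ℕ, ∀ σ ∈ Set.Icc (0:ℝ) T, y (k+1) σ < y k σ := by
    intro k
    refine crossing_lt (hyd (k+1)) (hyd k) ?_ ?_
    · rw [hy0 (k+1), hy0 k]
      have : ((1:ℝ)/2)^(k+1) < (1/2)^k :=
        pow_lt_pow_right_of_lt_one₀ (by norm_num) (by norm_num) (Nat.lt_succ_self k)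
      linarith
    · intro σ hσ heq
      rw [heq]
      exact supConv_succ_lt hgB k (σ, y k σ)
  -- the reversed-time barrier value is a strict subsolution
  set vt : ℝ → ℝ := fun σ => v (t₁ - σ) with hvtdef
  have hmaps : Set.MapsTo (fun σ : ℝ => t₁ - σ) (Set.Icc 0 T) (Set.Icc s t₁) := by
    intro σ hσ
    constructor <;> [skip; skip] <;> simp only [hTdef] at hσ ⊢
    · linarith [hσ.2]
    · linarith [hσ.1]
  have hvtd : ∀ σ ∈ Set.Icc (0:ℝ) T, HasDerivWithinAt vt (dv (t₁ - σ) * (-1))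
      (Set.Icc 0 T) σ := by
    intro σ hσ
    have hA : HasDerivWithinAt (fun σ : ℝ => t₁ - σ) (-1) (Set.Icc 0 T) σ :=
      ((hasDerivAt_id σ).const_sub t₁).hasDerivWithinAt
    exact (hv (t₁ - σ) (hmaps hσ)).comp σ hA hmaps
  have hvtK : ∀ σ ∈ Set.Icc (0:ℝ) T, vt σ ∈ Set.Icc (m-1) (M+1) := by
    intro σ hσ
    have := hmle (t₁ - σ) (hmaps hσ)
    have := hMge (t₁ - σ) (hmaps hσ)
    constructor <;> simp only [hvtdef] <;> linarith
  have hgval : ∀ σ ∈ Set.Icc (0:ℝ) T, ∀ z ∈ Set.Icc (m-1) (M+1),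
      g (σ, z) = μ (t₁ - σ, z) := by
    intro σ hσ z hz
    simp only [hgdef, hQdef]
    rw [hπ1id σ hσ, hπ2id z hz]
  have hvtle : ∀ σ ∈ Set.Icc (0:ℝ) T, dv (t₁ - σ) * (-1) ≤ g (σ, vt σ) := by
    intro σ hσ
    rw [hgval σ hσ (vt σ) (hvtK σ hσ)]
    have := hdv (t₁ - σ) (hmaps hσ)
    simp only [hvtdef]
    linarith
  -- comparison: vt < y k
  have hcomp : ∀ k : ℕ, ∀ σ ∈ Set.Icc (0:ℝ) T, vt σ < y k σ := by
    intro k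
    refine crossing_lt hvtd (hyd k) ?_ ?_
    · rw [hy0 k]
      have : (0:ℝ) < (1/2)^k := by positivity
      simp only [hvtdef, sub_zero]
      linarith
    · intro σ hσ heq
      calc dv (t₁ - σ) * (-1) ≤ g (σ, vt σ) := hvtle σ hσ
        _ < g (σ, vt σ) + (1/2)^k := by
              have : (0:ℝ) < (1/2)^k := by positivity
              linarith
        _ ≤ supConv g k (σ, vt σ) := le_supConv hgB k (σ, vt σ)
        _ = supConv g k (σ, y k σ) := by rw [heq]
  -- the monotone limit
  set yh : ℝ → ℝ := fun σ => ⨅ k, y k σ with hyhdef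
  have hbddB : ∀ σ ∈ Set.Icc (0:ℝ) T, BddBelow (Set.range fun k => y k σ) := by
    intro σ hσ
    exact ⟨vt σ, by rintro r ⟨k, rfl⟩; exact (hcomp k σ hσ).le⟩
  have hanti : ∀ σ ∈ Set.Icc (0:ℝ) T, Antitone fun k => y k σ := fun σ hσ =>
    antitone_nat_of_succ_le fun k => (hydec k σ hσ).le
  have hylim : ∀ σ ∈ Set.Icc (0:ℝ) T, Filter.Tendsto (fun k => y k σ) Filter.atTop (𝓝 (yh σ)) :=
    fun σ hσ => tendsto_atTop_ciInf (hanti σ hσ) (hbddB σ hσ)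
  have hyh_low : ∀ σ ∈ Set.Icc (0:ℝ) T, vt σ ≤ yh σ := fun σ hσ =>
    le_ciInf fun k => (hcomp k σ hσ).le
  have hyh_le : ∀ σ ∈ Set.Icc (0:ℝ) T, ∀ k, yh σ ≤ y k σ := fun σ hσ k =>
    ciInf_le (hbddB σ hσ) k
  -- Lipschitz bounds
  have hylip : ∀ k, LipschitzOnWith ((B+1).toNNReal) (y k) (Set.Icc 0 T) := by
    intro k
    refine (convex_Icc (0:ℝ) T).lipschitzOnWith_of_nnnorm_hasDerivWithin_le
      (fun σ hσ => hyd k σ hσ) ?_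
    intro σ hσ
    rw [← NNReal.coe_le_coe, coe_nnnorm, Real.norm_eq_abs,
      Real.coe_toNNReal _ (by linarith : (0:ℝ) ≤ B+1), abs_le]
    have h1 := supConv_le hgB k (σ, y k σ)
    have h2 := le_supConv hgB k (σ, y k σ)
    have h3 := (abs_le.mp (hgB (σ, y k σ))).1
    have h4 : (0:ℝ) < (1/2)^k := by positivity
    have h5 : ((1:ℝ)/2)^k ≤ 1 := pow_le_one₀ (by norm_num) (by norm_num)
    constructor <;> nlinarith
  have hyhlip : LipschitzOnWith ((B+1).toNNReal) yh (Set.Icc 0 T) :=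
    lipschitzOnWith_iInf hylip (fun σ hσ => hbddB σ hσ)
  have hyhcont : ContinuousOn yh (Set.Icc 0 T) := hyhlip.continuousOn
  have hycont : ∀ k, ContinuousOn (y k) (Set.Icc 0 T) := fun k => (hylip k).continuousOn
  -- integral equation for the approximations
  have hyint : ∀ k, ∀ τ' ∈ Set.Icc (0:ℝ) T,
      ∫ u in (0:ℝ)..τ', supConv g k (u, y k u) = y k τ' - (v t₁ + (1/2)^k) := by
    intro k τ' hτ'
    rw [← hy0 k]
    refine intervalIntegral.integral_eq_sub_of_hasDeriv_right_of_le hτ'.1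
      ((hycont k).mono (Set.Icc_subset_Icc le_rfl hτ'.2)) ?_ ?_
    · intro u hu
      refine ((hyd k u ⟨hu.1.le, hu.2.le.trans hτ'.2⟩).hasDerivAt ?_).hasDerivWithinAt
      exact Icc_mem_nhds hu.1 (lt_of_lt_of_le hu.2 hτ'.2)
    · have hci : ContinuousOn (fun u => supConv g k (u, y k u)) (Set.Icc 0 τ') :=
        (supConv_continuous hgB hgUC k).comp_continuousOn
          (continuousOn_id.prodMk ((hycont k).mono (Set.Icc_subset_Icc le_rfl hτ'.2)))
      exact hci.intervalIntegrable_of_Icc hτ'.1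
  -- integral equation for the limit
  have hyhint : ∀ τ' ∈ Set.Icc (0:ℝ) T,
      yh τ' = v t₁ + ∫ u in (0:ℝ)..τ', g (u, yh u) := by
    intro τ' hτ'
    have hIsub : Set.uIoc (0:ℝ) τ' ⊆ Set.Icc 0 T := by
      rw [Set.uIoc_of_le hτ'.1]
      exact fun u hu => ⟨hu.1.le, hu.2.trans hτ'.2⟩
    have hmes : ∀ k, MeasureTheory.AEStronglyMeasurable (fun u => supConv g k (u, y k u))
        (MeasureTheory.volume.restrict (Set.uIoc (0:ℝ) τ')) := by
      intro k
      refine ContinuousOn.aestronglyMeasurable ?_ measurableSet_uIoc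
      exact ((supConv_continuous hgB hgUC k).comp_continuousOn
        (continuousOn_id.prodMk ((hycont k).mono hIsub)))
    have hDCT : Filter.Tendsto (fun k => ∫ u in (0:ℝ)..τ', supConv g k (u, y k u))
        Filter.atTop (𝓝 (∫ u in (0:ℝ)..τ', g (u, yh u))) := by
      refine intervalIntegral.tendsto_integral_filter_of_dominated_convergence
        (bound := fun _ => B + 1) (Filter.Eventually.of_forall hmes) ?_ ?_ ?_
      · refine Filter.Eventually.of_forall fun k => MeasureTheory.ae_of_all _ fun u _ => ?_
        rw [Real.norm_eq_abs, abs_le]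
        have h1 := supConv_le hgB k (u, y k u)
        have h2 := le_supConv hgB k (u, y k u)
        have h3 := (abs_le.mp (hgB (u, y k u))).1
        have h4 : (0:ℝ) < (1/2)^k := by positivity
        have h5 : ((1:ℝ)/2)^k ≤ 1 := pow_le_one₀ (by norm_num) (by norm_num)
        constructor <;> nlinarith
      · exact intervalIntegrable_const
      · refine MeasureTheory.ae_of_all _ fun u hu => ?_
        have huT : u ∈ Set.Icc (0:ℝ) T := hIsub hu
        have hpart2 : Filter.Tendsto (fun k => g (u, y k u)) Filter.atTop (𝓝 (g (u, yh u))) := by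
          have h1 : Filter.Tendsto (fun k => ((u : ℝ), y k u)) Filter.atTop (𝓝 (u, yh u)) :=
            (tendsto_const_nhds.prodMk_nhds (hylim u huT))
          exact (hgc.tendsto (u, yh u)).comp h1
        have hpart1 : Filter.Tendsto
            (fun k => supConv g k (u, y k u) - g (u, y k u)) Filter.atTop (𝓝 0) := by
          rw [Metric.tendsto_atTop]
          intro ε hε
          obtain ⟨N, hN⟩ := supConv_close hgB hgUC (ε/2) (by linarith)
          refine ⟨N, fun k hk => ?_⟩
          have h1 := hN k hk (u, y k u)
          have h2 := le_supConv hgB k (u, y k u)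
          have h4 : (0:ℝ) < (1/2)^k := by positivity
          rw [Real.dist_eq, sub_zero, abs_lt]
          constructor <;> linarith
        have := hpart1.add hpart2
        rw [zero_add] at this
        convert this using 2 with k
        ring
      all_goals try skip
    have hL : Filter.Tendsto (fun k => y k τ') Filter.atTop (𝓝 (yh τ')) := hylim τ' hτ'
    have hR : Filter.Tendsto (fun k => (v t₁ + (1/2)^k) + ∫ u in (0:ℝ)..τ', supConv g k (u, y k u))
        Filter.atTop (𝓝 ((v t₁ + 0) + ∫ u in (0:ℝ)..τ', g (u, yh u))) := by
      refine Filter.Tendsto.add ?_ hDCT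
      exact tendsto_const_nhds.add (tendsto_pow_atTop_nhds_zero_of_lt_one (by norm_num)
        (by norm_num))
    have heq : (fun k => (v t₁ + (1/2)^k) + ∫ u in (0:ℝ)..τ', supConv g k (u, y k u))
        = fun k => y k τ' := by
      funext k
      rw [hyint k τ' hτ']
      ring
    rw [heq] at hR
    have := tendsto_nhds_unique hL hR
    rw [add_zero] at this
    exact this
  -- a globally-defined primitive
  set πT : ℝ → ℝ := fun r => min T (max 0 r) with hπTdef
  have hπTc : Continuous πT := continuous_const.min (continuous_const.max continuous_id)
  have hπTmem : ∀ r, πT r ∈ Set.Icc (0:ℝ) T := fun r =>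
    ⟨le_min hT.le (le_max_left _ _), min_le_left _ _⟩
  have hπTid : ∀ σ ∈ Set.Icc (0:ℝ) T, πT σ = σ := by
    intro σ hσ
    simp only [hπTdef]
    rw [max_eq_right hσ.1, min_eq_right hσ.2]
  set F : ℝ → ℝ := fun u => g (u, yh (πT u)) with hFdef
  have hFc : Continuous F := by
    refine hgc.comp (continuous_id.prodMk ?_)
    exact hyhcont.comp_continuous hπTc hπTmem
  set W : ℝ → ℝ := fun σ => v t₁ + ∫ u in (0:ℝ)..σ, F u with hWdef
  have hWy : ∀ σ ∈ Set.Icc (0:ℝ) T, W σ = yh σ := by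
    intro σ hσ
    have hEq : Set.EqOn F (fun u => g (u, yh u)) (Set.uIcc 0 σ) := by
      intro u hu
      rw [Set.uIcc_of_le hσ.1] at hu
      simp only [hFdef]
      rw [hπTid u ⟨hu.1, hu.2.trans hσ.2⟩]
    simp only [hWdef]
    rw [intervalIntegral.integral_congr hEq, ← hyhint σ hσ]
  have hWd : ∀ σ, HasDerivAt W (F σ) σ := by
    intro σ
    have := intervalIntegral.integral_hasDerivAt_right
      (hFc.intervalIntegrable 0 σ)
      (hFc.stronglyMeasurableAtFilter MeasureTheory.volume (𝓝 σ))
      (hFc.continuousAt)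
    exact this.const_add (v t₁)
  have hWc : Continuous W := by
    rw [continuous_iff_continuousAt]
    exact fun σ => (hWd σ).continuousAt
  have hW0 : W 0 = v t₁ := by
    simp only [hWdef, intervalIntegral.integral_same, add_zero]
  -- the first zero of W
  set A0 : Set ℝ := Set.Icc 0 T ∩ {σ | 0 ≤ W σ} with hA0def
  have hTA0 : T ∈ A0 := by
    refine ⟨Set.right_mem_Icc.mpr hT.le, ?_⟩
    have h1 : vt T ≤ yh T := hyh_low T (Set.right_mem_Icc.mpr hT.le)
    have h2 : vt T = v s := by simp only [hvtdef, hTdef]; ring_nf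
    rw [Set.mem_setOf_eq, hWy T (Set.right_mem_Icc.mpr hT.le)]
    rw [h2] at h1
    linarith
  have hA0closed : IsClosed A0 := isClosed_Icc.inter (isClosed_le continuous_const hWc)
  have hA0bdd : BddBelow A0 := ⟨0, fun σ hσ => hσ.1.1⟩
  set τs := sInf A0 with hτsdef
  have hτsA0 : τs ∈ A0 := hA0closed.csInf_mem ⟨T, hTA0⟩ hA0bdd
  have hτspos : 0 < τs := by
    rcases eq_or_lt_of_le hτsA0.1.1 with h | h
    · exfalso
      have := hτsA0.2
      rw [Set.mem_setOf_eq, ← h, hW0] at this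
      linarith
    · exact h
  have hWneg : ∀ σ ∈ Set.Ico 0 τs, W σ < 0 := by
    intro σ hσ
    by_contra hc
    push_neg at hc
    have : σ ∈ A0 := ⟨⟨hσ.1, hσ.2.le.trans hτsA0.1.2⟩, hc⟩
    exact absurd (csInf_le hA0bdd this) (not_le.mpr hσ.2)
  have hWτs : W τs = 0 := by
    refine le_antisymm ?_ hτsA0.2
    have hne : (𝓝[Set.Ico 0 τs] τs).NeBot := right_nhdsWithin_Ico_neBot hτspos
    have htend : Filter.Tendsto W (𝓝[Set.Ico 0 τs] τs) (𝓝 (W τs)) :=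
      (hWc.continuousAt).continuousWithinAt
    exact le_of_tendsto htend (eventually_nhdsWithin_of_forall fun σ hσ => (hWneg σ hσ).le)
  -- value of F on [0, τs]
  have hFval : ∀ σ ∈ Set.Icc 0 τs, F σ = μ (t₁ - σ, W σ) := by
    intro σ hσ
    have hσT : σ ∈ Set.Icc 0 T := ⟨hσ.1, hσ.2.trans hτsA0.1.2⟩
    have hyhW : yh σ = W σ := (hWy σ hσT).symm
    have hWm : m ≤ W σ := by
      have h1 := hyh_low σ hσT
      have h2 := hmle (t₁ - σ) (hmaps hσT)
      rw [← hyhW]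
      simp only [hvtdef] at h1
      linarith
    have hWle : W σ ≤ 0 := by
      rcases eq_or_lt_of_le hσ.2 with h | h
      · rw [h, hWτs]
      · exact (hWneg σ ⟨hσ.1, h⟩).le
    have hWK : W σ ∈ Set.Icc (m-1) (M+1) := ⟨by linarith, by linarith⟩
    simp only [hFdef]
    rw [hπTid σ hσT, hyhW, hgval σ hσT (W σ) hWK]
  -- the contradiction with the minimality property of μ
  set t₀' := t₁ - τs with ht₀'def
  have ht₀'s : s ≤ t₀' := by simp only [ht₀'def]; linarith [hτsA0.1.2]
  have ht₀'lt : t₀' < t₁ := by simp only [ht₀'def]; linarith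
  have ht₀'0 : 0 ≤ t₀' := hs0.trans ht₀'s
  set w : ℝ → ℝ := fun t => if t < t₀' then (-μ (t₀', 0)) * (t - t₀') else W (t₁ - t)
    with hwdef
  have hwt₀' : w t₀' = 0 := by
    simp only [hwdef, if_neg (lt_irrefl t₀')]
    have : t₁ - t₀' = τs := by simp only [ht₀'def]; ring
    rw [this, hWτs]
  have hFτs : F τs = μ (t₀', 0) := by
    rw [hFval τs ⟨hτspos.le, le_rfl⟩, hWτs]
  have hode : ∀ t ∈ Set.Ico t₀' t₁, HasDerivAt w (-μ (t, w t)) t := by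
    intro t ht
    have hcomprule : ∀ r : ℝ, HasDerivAt (fun r' => W (t₁ - r')) (F (t₁ - r) * (-1)) r := by
      intro r
      have h1 : HasDerivAt (fun r' : ℝ => t₁ - r') (-1) r :=
        (hasDerivAt_id r).const_sub t₁
      exact (hWd (t₁ - r)).comp r h1
    rcases eq_or_lt_of_le ht.1 with heq | hlt'
    · -- t = t₀' : glue the two pieces
      subst heq
      have h2 : t₁ - t₀' = τs := by simp only [ht₀'def]; ring
      have hval : F (t₁ - t₀') * (-1) = -μ (t₀', 0) := by rw [h2, hFτs]; ring
      have hright : HasDerivWithinAt w (-μ (t₀', 0)) (Set.Ici t₀') t₀' := by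
        have heqon : Set.EqOn w (fun r => W (t₁ - r)) (Set.Ici t₀') := by
          intro r hr
          simp only [hwdef, if_neg (not_lt.mpr (Set.mem_Ici.mp hr))]
        exact hval ▸ ((hcomprule t₀').hasDerivWithinAt.congr heqon (heqon Set.self_mem_Ici))
      have hleft : HasDerivWithinAt w (-μ (t₀', 0)) (Set.Iic t₀') t₀' := by
        have hlin : HasDerivAt (fun r => (-μ (t₀', 0)) * (r - t₀')) (-μ (t₀', 0)) t₀' := by
          have := ((hasDerivAt_id t₀').sub_const t₀').const_mul (-μ (t₀', 0))
          simpa using this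
        have heqon : Set.EqOn w (fun r => (-μ (t₀', 0)) * (r - t₀')) (Set.Iic t₀') := by
          intro r hr
          rcases eq_or_lt_of_le (Set.mem_Iic.mp hr) with h | h
          · rw [h]
            simp only [hwdef, if_neg (lt_irrefl t₀')]
            rw [h2, hWτs]
            ring
          · simp only [hwdef, if_pos h]
        exact hlin.hasDerivWithinAt.congr heqon (heqon Set.self_mem_Iic)
      have := hleft.union hright
      rw [Set.Iic_union_Ici, hasDerivWithinAt_univ] at this
      rw [hwt₀']
      exact this
    · -- interior case
      have hσmem : t₁ - t ∈ Set.Ico 0 τs := by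
        constructor
        · linarith [ht.2]
        · simp only [ht₀'def] at hlt'; linarith
      have hweq : w =ᶠ[𝓝 t] fun r => W (t₁ - r) := by
        have : ∀ᶠ r in 𝓝 t, t₀' < r := eventually_gt_nhds hlt'
        filter_upwards [this] with r hr
        simp only [hwdef, if_neg (not_lt.mpr hr.le)]
      have hder : HasDerivAt w (F (t₁ - t) * (-1)) t :=
        (hcomprule t).congr_of_eventuallyEq hweq
      have hwt : w t = W (t₁ - t) := by
        simp only [hwdef, if_neg (not_lt.mpr hlt'.le)]
      have hFt : F (t₁ - t) = μ (t, W (t₁ - t)) := by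
        have := hFval (t₁ - t) ⟨hσmem.1, hσmem.2.le⟩
        rw [this]
        congr 1
        ring_nf
      rw [hwt]
      have : F (t₁ - t) * (-1) = -μ (t, W (t₁ - t)) := by rw [hFt]; ring
      exact this ▸ hder
  -- apply the minimal-function property and derive the contradiction
  have hpos := hμmin t₀' ht₀'0 t₁ w hwt₀' hode
  have hmid : (t₀' + t₁)/2 ∈ Set.Ico t₀' t₁ := by
    constructor <;> [linarith; linarith]
  have h1 := hpos _ hmid
  have h2 : w ((t₀' + t₁)/2) = W (τs/2) := by
    have hnl : ¬ ((t₀' + t₁)/2 < t₀') := by push_neg; linarith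
    simp only [hwdef, if_neg hnl]
    congr 1
    simp only [ht₀'def]
    ring
  have h3 : W (τs/2) < 0 := hWneg (τs/2) ⟨by linarith, by linarith⟩
  rw [h2] at h1
  linarith

/-- Theorem 7: time-varying minimal barrier functions. If `μ` is a
time-varying minimal function and the time-varying barrier condition
`∂h/∂t(t,x) + ∇_x h(t,x)·f(t,x) ≥ −μ(t, h(t,x))` holds on `[0,∞) × D` (expressed as the
derivative of `h` within `[0,∞) × D` in the direction `(1, f(t,x))`), then any solution
starting in `S_{t₀}` remains in `S_t`. -/
theorem time_varying_minimal_barrier_invariance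
    {n : ℕ} (D : Set (EuclideanSpace ℝ (Fin n))) (hD : IsOpen D)
    (f : ℝ × EuclideanSpace ℝ (Fin n) → EuclideanSpace ℝ (Fin n))
    (hf : ContinuousOn f (Set.Ici (0 : ℝ) ×ˢ D))
    (h : ℝ × EuclideanSpace ℝ (Fin n) → ℝ)
    (hh : ContDiffOn ℝ 1 h (Set.Ici (0 : ℝ) ×ˢ D))
    (hSne : ∀ t : ℝ, 0 ≤ t → ∃ x ∈ D, 0 ≤ h (t, x))
    (μ : ℝ × ℝ → ℝ) (hμc : ContinuousOn μ (Set.Ici (0 : ℝ) ×ˢ Set.univ))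
    -- (i) μ is a time-varying minimal function
    (hμmin : ∀ t₀ : ℝ, 0 ≤ t₀ → ∀ τ : ℝ, ∀ w : ℝ → ℝ, w t₀ = 0 →
      (∀ t ∈ Set.Ico t₀ τ, HasDerivAt w (-μ (t, w t)) t) →
      ∀ t ∈ Set.Ico t₀ τ, 0 ≤ w t)
    -- (ii) the time-varying barrier condition
    (hbar : ∀ t : ℝ, 0 ≤ t → ∀ x ∈ D,
      -μ (t, h (t, x)) ≤
        fderivWithin ℝ h (Set.Ici (0 : ℝ) ×ˢ D) (t, x) (1, f (t, x)))
    (t₀ : ℝ) (ht₀ : 0 ≤ t₀) (τ : ℝ) (x : ℝ → EuclideanSpace ℝ (Fin n))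
    (hxD : ∀ t ∈ Set.Ico t₀ τ, x t ∈ D)
    (hxsol : ∀ t ∈ Set.Ico t₀ τ, HasDerivAt x (f (t, x t)) t)
    (hx0 : 0 ≤ h (t₀, x t₀)) :
    ∀ t ∈ Set.Ico t₀ τ, 0 ≤ h (t, x t) := by
  intro t ht
  set S : Set (ℝ × EuclideanSpace ℝ (Fin n)) := Set.Ici (0 : ℝ) ×ˢ D with hSdef
  have hmemS : ∀ r ∈ Set.Ico t₀ τ, ((r : ℝ), x r) ∈ S := fun r hr =>
    ⟨ht₀.trans hr.1, hxD r hr⟩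
  have hmaps : Set.MapsTo (fun r : ℝ => ((r : ℝ), x r)) (Set.Ico t₀ τ) S := fun r hr =>
    hmemS r hr
  have hvd : ∀ r ∈ Set.Ico t₀ τ, HasDerivWithinAt (fun r' => h (r', x r'))
      (fderivWithin ℝ h S (r, x r) (1, f (r, x r))) (Set.Ico t₀ τ) r := by
    intro r hr
    have hγ : HasDerivAt (fun r' : ℝ => ((r' : ℝ), x r')) ((1 : ℝ), f (r, x r)) r :=
      (hasDerivAt_id r).prodMk (hxsol r hr)
    have hdiff : DifferentiableWithinAt ℝ h S (r, x r) :=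
      (hh.differentiableOn one_ne_zero) (r, x r) (hmemS r hr)
    exact hdiff.hasFDerivWithinAt.comp_hasDerivWithinAt r hγ.hasDerivWithinAt hmaps
  have hsub : Set.Icc t₀ t ⊆ Set.Ico t₀ τ := fun r hr => ⟨hr.1, lt_of_le_of_lt hr.2 ht.2⟩
  refine scalar_comparison μ hμc hμmin ht₀ ht.1
    (v := fun r => h (r, x r))
    (dv := fun r => fderivWithin ℝ h S (r, x r) (1, f (r, x r))) ?_ ?_ hx0
  · intro r hr
    exact ((hvd r (hsub hr)).mono hsub)
  · intro r hr
    exact hbar r (ht₀.trans hr.1) (x r) (hxD r (hsub hr))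
end

section
/- Let g : ℝ → ℝ be continuous and let w : [0,τ) → ℝ be any differentiable function with ẇ(t) = g(w(t)) for all t ∈ [0,τ). Then w is monotone on [0,τ), i.e. w is either nondecreasing on [0,τ) or nonincreasing on [0,τ). -/
open Set Filter Topology

/-- One-sided derivative sign: if `f a ≤ f t` just to the right of `a`, the derivative is `≥ 0`. -/
lemma aux_deriv_nonneg_right {f : ℝ → ℝ} {d a b : ℝ} (hab : a < b)
    (hf : HasDerivAt f d a) (h : ∀ t ∈ Set.Ioc a b, f a ≤ f t) : 0 ≤ d := by
  have hs := hasDerivAt_iff_tendsto_slope.1 hf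
  have h2 : Tendsto (slope f a) (𝓝[>] a) (𝓝 d) :=
    hs.mono_left (nhdsWithin_mono a fun x hx => ne_of_gt hx)
  refine ge_of_tendsto h2 ?_
  filter_upwards [Ioc_mem_nhdsGT_of_mem ⟨le_refl a, hab⟩] with t ht
  rw [slope_def_field]
  exact div_nonneg (sub_nonneg.2 (h t ht)) (sub_nonneg.2 ht.1.le)

/-- One-sided derivative sign: if `f a ≤ f t` just to the left of `a`, the derivative is `≤ 0`. -/
lemma aux_deriv_nonpos_left {f : ℝ → ℝ} {d a b : ℝ} (hab : b < a)
    (hf : HasDerivAt f d a) (h : ∀ t ∈ Set.Ico b a, f a ≤ f t) : d ≤ 0 := by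
  have hs := hasDerivAt_iff_tendsto_slope.1 hf
  have h2 : Tendsto (slope f a) (𝓝[<] a) (𝓝 d) :=
    hs.mono_left (nhdsWithin_mono a fun x hx => ne_of_lt hx)
  refine le_of_tendsto h2 ?_
  filter_upwards [Ico_mem_nhdsLT_of_mem ⟨hab, le_refl a⟩] with t ht
  rw [slope_def_field]
  exact div_nonpos_of_nonneg_of_nonpos (sub_nonneg.2 (h t ht)) (sub_nonpos.2 ht.2.le)

/-- Last crossing of level `y` on `[a,b]` with `w b` above `y`. -/
lemma exists_last_crossing {w : ℝ → ℝ} {a b y : ℝ} (hab : a ≤ b)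
    (hcont : ContinuousOn w (Set.Icc a b)) (hy : y ∈ Set.Icc (w a) (w b))
    (hyb : y < w b) :
    ∃ α ∈ Set.Ico a b, w α = y ∧ ∀ t ∈ Set.Ioc α b, y < w t := by
  set A : Set ℝ := Set.Icc a b ∩ w ⁻¹' {y} with hA
  have hAne : A.Nonempty := by
    obtain ⟨x, hx, hxy⟩ := intermediate_value_Icc hab hcont hy
    exact ⟨x, hx, hxy⟩
  have hAcl : IsClosed A := hcont.preimage_isClosed_of_isClosed isClosed_Icc isClosed_singleton
  have hAcp : IsCompact A := isCompact_Icc.of_isClosed_subset hAcl Set.inter_subset_left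
  obtain ⟨α, ⟨hαA, hαy⟩, hαg⟩ := hAcp.exists_isGreatest hAne
  have hαy' : w α = y := hαy
  have hαb : α < b := lt_of_le_of_ne hαA.2 (fun h => by rw [h] at hαy'; exact absurd hαy' hyb.ne')
  refine ⟨α, ⟨hαA.1, hαb⟩, hαy', ?_⟩
  intro t ht
  by_contra hle
  push_neg at hle
  have htmem : t ∈ Set.Icc a b := ⟨le_trans hαA.1 ht.1.le, ht.2⟩
  rcases eq_or_lt_of_le hle with heq' | hlt
  · exact absurd (hαg ⟨htmem, heq'⟩) (not_le.2 ht.1)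
  · obtain ⟨r, hr, hry⟩ := intermediate_value_Icc ht.2
      (hcont.mono (Set.Icc_subset_Icc htmem.1 le_rfl)) ⟨hlt.le, hyb.le⟩
    exact absurd (hαg ⟨⟨le_trans htmem.1 hr.1, hr.2⟩, hry⟩)
      (not_le.2 (lt_of_lt_of_le ht.1 hr.1))

/-- First crossing of level `y` on `[a,b]` with `w a` above `y`. -/
lemma exists_first_crossing {w : ℝ → ℝ} {a b y : ℝ} (hab : a ≤ b)
    (hcont : ContinuousOn w (Set.Icc a b)) (hy : y ∈ Set.Icc (w b) (w a))
    (hya : y < w a) :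
    ∃ β ∈ Set.Ioc a b, w β = y ∧ ∀ t ∈ Set.Ico a β, y < w t := by
  set A : Set ℝ := Set.Icc a b ∩ w ⁻¹' {y} with hA
  have hAne : A.Nonempty := by
    obtain ⟨x, hx, hxy⟩ := intermediate_value_Icc' hab hcont hy
    exact ⟨x, hx, hxy⟩
  have hAcl : IsClosed A := hcont.preimage_isClosed_of_isClosed isClosed_Icc isClosed_singleton
  have hAcp : IsCompact A := isCompact_Icc.of_isClosed_subset hAcl Set.inter_subset_left
  obtain ⟨β, ⟨hβA, hβy⟩, hβl⟩ := hAcp.exists_isLeast hAne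
  have hβy' : w β = y := hβy
  have haβ : a < β := lt_of_le_of_ne hβA.1 (fun h => by rw [← h] at hβy'; exact absurd hβy' hya.ne')
  refine ⟨β, ⟨haβ, hβA.2⟩, hβy', ?_⟩
  intro t ht
  by_contra hle
  push_neg at hle
  have htmem : t ∈ Set.Icc a b := ⟨ht.1, le_trans ht.2.le hβA.2⟩
  rcases eq_or_lt_of_le hle with heq' | hlt
  · exact absurd (hβl ⟨htmem, heq'⟩) (not_le.2 ht.2)
  · obtain ⟨r, hr, hry⟩ := intermediate_value_Icc' ht.1
      (hcont.mono (Set.Icc_subset_Icc le_rfl htmem.2)) ⟨hlt.le, hya.le⟩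
    exact absurd (hβl ⟨⟨hr.1, le_trans hr.2 htmem.2⟩, hry⟩)
      (not_le.2 (lt_of_le_of_lt hr.2 ht.2))

/-- Key lemma: a solution cannot have a strict interior maximum above equal endpoint values. -/
lemma keyA (g : ℝ → ℝ) (τ : ℝ) (w : ℝ → ℝ)
    (hw : ∀ t ∈ Set.Ico (0 : ℝ) τ, HasDerivAt w (g (w t)) t)
    {t1 t2 s : ℝ} (h1 : t1 ∈ Set.Ico (0 : ℝ) τ) (h2 : t2 ∈ Set.Ico (0 : ℝ) τ)
    (h12 : t1 < t2) (heq : w t1 = w t2) (hs : s ∈ Set.Ioo t1 t2)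
    (hws : w t1 < w s) : False := by
  have hsub : Set.Icc t1 t2 ⊆ Set.Ico (0 : ℝ) τ := fun t ht =>
    ⟨le_trans h1.1 ht.1, lt_of_le_of_lt ht.2 h2.2⟩
  have hcont : ContinuousOn w (Set.Icc t1 t2) := fun t ht =>
    (hw t (hsub ht)).continuousAt.continuousWithinAt
  obtain ⟨s', hs'mem, hs'max⟩ :=
    isCompact_Icc.exists_isMaxOn (Set.nonempty_Icc.2 h12.le) hcont
  have hsmem : s ∈ Set.Icc t1 t2 := ⟨hs.1.le, hs.2.le⟩
  have hcm : w t1 < w s' := lt_of_lt_of_le hws (hs'max hsmem)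
  have hs'1 : t1 < s' := lt_of_le_of_ne hs'mem.1 (fun h => by rw [← h] at hcm; exact lt_irrefl _ hcm)
  have hs'2 : s' < t2 := lt_of_le_of_ne hs'mem.2 (fun h => by rw [h, ← heq] at hcm; exact lt_irrefl _ hcm)
  have hs'I : s' ∈ Set.Ico (0 : ℝ) τ := hsub hs'mem
  -- derivative zero at the max value
  have hlocmax : IsLocalMax w s' :=
    Filter.eventually_of_mem (Icc_mem_nhds hs'1 hs'2) hs'max
  have hgm : g (w s') = 0 := hlocmax.hasDerivAt_eq_zero (hw s' hs'I)
  -- g vanishes on the open interval of values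
  have hgzero : ∀ y ∈ Set.Ioo (w t1) (w s'), g y = 0 := by
    intro y hy
    -- right side of level y on [t1, s']
    have hcont1 : ContinuousOn w (Set.Icc t1 s') :=
      hcont.mono (Set.Icc_subset_Icc le_rfl hs'2.le)
    obtain ⟨α, hαmem, hαy, hαgt⟩ :=
      exists_last_crossing hs'1.le hcont1 ⟨hy.1.le, hy.2.le⟩ hy.2
    have hαI : α ∈ Set.Ico (0 : ℝ) τ :=
      hsub ⟨hαmem.1, le_trans hαmem.2.le hs'2.le⟩
    have hge : 0 ≤ g y := by
      have := aux_deriv_nonneg_right hαmem.2 (hw α hαI)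
        (fun t ht => by rw [hαy]; exact (hαgt t ht).le)
      rwa [hαy] at this
    -- left side of level y on [s', t2]
    have hcont2 : ContinuousOn w (Set.Icc s' t2) :=
      hcont.mono (Set.Icc_subset_Icc hs'1.le le_rfl)
    obtain ⟨β, hβmem, hβy, hβgt⟩ :=
      exists_first_crossing hs'2.le hcont2 ⟨(heq ▸ hy.1.le), hy.2.le⟩ hy.2
    have hβI : β ∈ Set.Ico (0 : ℝ) τ :=
      hsub ⟨le_trans hs'1.le hβmem.1.le, hβmem.2⟩
    have hle : g y ≤ 0 := by
      have := aux_deriv_nonpos_left hβmem.1 (hw β hβI)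
        (fun t ht => by rw [hβy]; exact (hβgt t ht).le)
      rwa [hβy] at this
    exact le_antisymm hle hge
  -- last crossing of the base level before the max
  have hcont1 : ContinuousOn w (Set.Icc t1 s') :=
    hcont.mono (Set.Icc_subset_Icc le_rfl hs'2.le)
  obtain ⟨u, humem, huy, hugt⟩ :=
    exists_last_crossing hs'1.le hcont1 ⟨le_rfl, hcm.le⟩ hcm
  -- mean value theorem on [u, s']
  obtain ⟨x, hx, hxslope⟩ := exists_hasDerivAt_eq_slope w (fun t => g (w t)) humem.2
    (hcont1.mono (Set.Icc_subset_Icc humem.1 le_rfl))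
    (fun x hx => hw x (hsub ⟨le_trans humem.1 hx.1.le, le_trans hx.2.le hs'2.le⟩))
  have hxpos : 0 < g (w x) := by
    rw [hxslope, huy]
    exact div_pos (sub_pos.2 hcm) (sub_pos.2 humem.2)
  have hxgt : w t1 < w x := hugt x ⟨hx.1, hx.2.le⟩
  have hxle : w x ≤ w s' :=
    hs'max ⟨le_trans humem.1 hx.1.le, le_trans hx.2.le hs'2.le⟩
  rcases eq_or_lt_of_le hxle with hxe | hxlt
  · rw [hxe, hgm] at hxpos; exact lt_irrefl _ hxpos
  · rw [hgzero (w x) ⟨hxgt, hxlt⟩] at hxpos; exact lt_irrefl _ hxpos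

/-- Constancy between equal values. -/
lemma keyB (g : ℝ → ℝ) (τ : ℝ) (w : ℝ → ℝ)
    (hw : ∀ t ∈ Set.Ico (0 : ℝ) τ, HasDerivAt w (g (w t)) t)
    {t1 t2 : ℝ} (h1 : t1 ∈ Set.Ico (0 : ℝ) τ) (h2 : t2 ∈ Set.Ico (0 : ℝ) τ)
    (heq : w t1 = w t2) : ∀ t ∈ Set.Icc t1 t2, w t = w t1 := by
  intro t ht
  rcases eq_or_lt_of_le ht.1 with h1t | h1t
  · rw [← h1t]
  rcases eq_or_lt_of_le ht.2 with ht2 | ht2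
  · rw [ht2, heq]
  have h12 : t1 < t2 := lt_trans h1t ht2
  rcases lt_trichotomy (w t) (w t1) with hlt | heq' | hgt
  · exfalso
    have hw' : ∀ u ∈ Set.Ico (0 : ℝ) τ,
        HasDerivAt (fun r => -w r) ((fun z => -g (-z)) (-w u)) u := by
      intro u hu
      have := (hw u hu).neg; simp only [neg_neg]; exact this
    exact keyA (fun z => -g (-z)) τ (fun r => -w r) hw' h1 h2 h12
      (by simp [heq]) ⟨h1t, ht2⟩ (by simpa using hlt)
  · exact heq'
  · exact absurd (keyA g τ w hw h1 h2 h12 heq ⟨h1t, ht2⟩ hgt) not_false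

/-- Betweenness of values. -/
lemma keyD (g : ℝ → ℝ) (τ : ℝ) (w : ℝ → ℝ)
    (hw : ∀ t ∈ Set.Ico (0 : ℝ) τ, HasDerivAt w (g (w t)) t)
    {x y : ℝ} (hx : x ∈ Set.Ico (0 : ℝ) τ) (hy : y ∈ Set.Ico (0 : ℝ) τ)
    (hxy : x ≤ y) (hwxy : w x < w y) :
    ∀ t ∈ Set.Icc x y, w t ∈ Set.Icc (w x) (w y) := by
  have hsub : Set.Icc x y ⊆ Set.Ico (0 : ℝ) τ := fun t ht =>
    ⟨le_trans hx.1 ht.1, lt_of_le_of_lt ht.2 hy.2⟩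
  have hcont : ContinuousOn w (Set.Icc x y) := fun t ht =>
    (hw t (hsub ht)).continuousAt.continuousWithinAt
  intro t ht
  constructor
  · by_contra hle
    push_neg at hle
    have htx : x < t := by
      rcases eq_or_lt_of_le ht.1 with h | h
      · rw [← h] at hle; exact absurd hle (lt_irrefl _)
      · exact h
    obtain ⟨q, hq, hqy⟩ := intermediate_value_Icc ht.2
      (hcont.mono (Set.Icc_subset_Icc ht.1 le_rfl)) ⟨hle.le, hwxy.le⟩
    have := keyB g τ w hw hx (hsub ⟨le_trans ht.1 hq.1, hq.2⟩) hqy.symm t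
      ⟨ht.1, hq.1⟩
    rw [this] at hle; exact lt_irrefl _ hle
  · by_contra hle
    push_neg at hle
    have hty : t < y := by
      rcases eq_or_lt_of_le ht.2 with h | h
      · rw [h] at hle; exact absurd hle (lt_irrefl _)
      · exact h
    obtain ⟨p, hp, hpy⟩ := intermediate_value_Icc ht.1
      (hcont.mono (Set.Icc_subset_Icc le_rfl ht.2)) ⟨hwxy.le, hle.le⟩
    have := keyB g τ w hw (hsub ⟨hp.1, le_trans hp.2 ht.2⟩) hy hpy t
      ⟨hp.2, hty.le⟩
    rw [this, hpy] at hle; exact lt_irrefl _ hle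

/-- Monotone on any subinterval whose endpoint values are ordered. -/
lemma keyC (g : ℝ → ℝ) (τ : ℝ) (w : ℝ → ℝ)
    (hw : ∀ t ∈ Set.Ico (0 : ℝ) τ, HasDerivAt w (g (w t)) t)
    {x y : ℝ} (hx : x ∈ Set.Ico (0 : ℝ) τ) (hy : y ∈ Set.Ico (0 : ℝ) τ)
    (hxy : x ≤ y) (hwxy : w x ≤ w y) :
    ∀ p ∈ Set.Icc x y, ∀ q ∈ Set.Icc x y, p ≤ q → w p ≤ w q := by
  have hsub : Set.Icc x y ⊆ Set.Ico (0 : ℝ) τ := fun t ht =>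
    ⟨le_trans hx.1 ht.1, lt_of_le_of_lt ht.2 hy.2⟩
  intro p hp q hq hpq
  rcases eq_or_lt_of_le hwxy with heq | hlt
  · rw [keyB g τ w hw hx hy heq p hp, keyB g τ w hw hx hy heq q hq]
  · have hpI : p ∈ Set.Ico (0 : ℝ) τ := hsub hp
    have hpv := keyD g τ w hw hx hy hxy hlt p hp
    rcases eq_or_lt_of_le hpv.2 with hpe | hplt
    · have := keyB g τ w hw hpI hy hpe q ⟨hpq, hq.2⟩
      rw [this]
    · have := keyD g τ w hw hpI hy hp.2 hplt q ⟨hpq, hq.2⟩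
      exact this.1

/-- Antitone version by reflection. -/
lemma keyC' (g : ℝ → ℝ) (τ : ℝ) (w : ℝ → ℝ)
    (hw : ∀ t ∈ Set.Ico (0 : ℝ) τ, HasDerivAt w (g (w t)) t)
    {x y : ℝ} (hx : x ∈ Set.Ico (0 : ℝ) τ) (hy : y ∈ Set.Ico (0 : ℝ) τ)
    (hxy : x ≤ y) (hwxy : w y ≤ w x) :
    ∀ p ∈ Set.Icc x y, ∀ q ∈ Set.Icc x y, p ≤ q → w q ≤ w p := by
  intro p hp q hq hpq
  have hw' : ∀ u ∈ Set.Ico (0 : ℝ) τ,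
      HasDerivAt (fun r => -w r) ((fun z => -g (-z)) (-w u)) u := by
    intro u hu
    have := (hw u hu).neg; simp only [neg_neg]; exact this
  have := keyC (fun z => -g (-z)) τ (fun r => -w r) hw' hx hy hxy
    (neg_le_neg hwxy) p hp q hq hpq
  simpa using this

/-- any solution of a scalar autonomous ODE `ẇ = g(w)` with `g` continuous is
monotone on its interval of existence `[0,τ)`. -/
theorem scalar_autonomous_solution_monotone
    (g : ℝ → ℝ) (hg : Continuous g) (τ : ℝ) (w : ℝ → ℝ)
    (hw : ∀ t ∈ Set.Ico (0 : ℝ) τ, HasDerivAt w (g (w t)) t) :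
    MonotoneOn w (Set.Ico (0 : ℝ) τ) ∨ AntitoneOn w (Set.Ico (0 : ℝ) τ) := by
  by_cases H : ∀ a ∈ Set.Ico (0 : ℝ) τ, ∀ b ∈ Set.Ico (0 : ℝ) τ, a ≤ b → w a ≤ w b
  · exact Or.inl (fun a ha b hb hab => H a ha b hb hab)
  · right
    push_neg at H
    obtain ⟨a, ha, b, hb, hab, hba⟩ := H
    intro c hc d hd hcd
    by_contra hcon
    push_neg at hcon
    set p := min a c with hp'
    set q := max b d with hq'
    have hpI : p ∈ Set.Ico (0 : ℝ) τ :=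
      ⟨le_min ha.1 hc.1, lt_of_le_of_lt (min_le_left _ _) ha.2⟩
    have hqI : q ∈ Set.Ico (0 : ℝ) τ :=
      ⟨le_trans hb.1 (le_max_left _ _), max_lt hb.2 hd.2⟩
    have hpq : p ≤ q := le_trans (min_le_left _ _) (le_trans hab (le_max_left _ _))
    have haM : a ∈ Set.Icc p q := ⟨min_le_left _ _, le_trans hab (le_max_left _ _)⟩
    have hbM : b ∈ Set.Icc p q := ⟨le_trans (min_le_left _ _) hab, le_max_left _ _⟩
    have hcM : c ∈ Set.Icc p q := ⟨min_le_right _ _, le_trans hcd (le_max_right _ _)⟩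
    have hdM : d ∈ Set.Icc p q := ⟨le_trans (min_le_right _ _) hcd, le_max_right _ _⟩
    rcases le_or_gt (w p) (w q) with h | h
    · exact absurd (keyC g τ w hw hpI hqI hpq h a haM b hbM hab) (not_le.2 hba)
    · exact absurd (keyC' g τ w hw hpI hqI hpq h.le c hcM d hdM hcd) (not_le.2 hcon)
end

section
/- Define μ : (−1,1) → ℝ by μ(w) = −w·log(w) for 0 < w < 1, μ(w) = w·log(−w) for −1 < w < 0, and μ(0) = 0. Then μ is continuous, and every differentiable w : [0,τ) → (−1,1) with w(0) = 0 and ẇ(t) = −μ(w(t)) for all t ∈ [0,τ) satisfies w(t) ≥ 0 for all t ∈ [0,τ); moreover μ is not locally Lipschitz at 0. -/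
open Real in
/-- The comparison function of Example 3: `μ(w) = −w·log w` for `0 < w < 1`,
`μ(w) = w·log(−w)` for `−1 < w < 0`, and `μ(0) = 0` (note `Real.log 0 = 0`). -/
noncomputable def muEx (w : ℝ) : ℝ :=
  if 0 < w then -w * Real.log w else w * Real.log (-w)

lemma muEx_eq_negMulLog : muEx = fun w => Real.negMulLog |w| := by
  funext w
  unfold muEx Real.negMulLog
  rcases lt_trichotomy 0 w with h | h | h
  · rw [if_pos h, abs_of_pos h]
  · subst h; simp
  · rw [if_neg (not_lt.2 h.le), abs_of_neg h]; ring

lemma muEx_zero : muEx 0 = 0 := by simp [muEx]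

lemma muEx_of_pos {w : ℝ} (h : 0 < w) : muEx w = -w * Real.log w := if_pos h

lemma muEx_of_nonpos {w : ℝ} (h : ¬ 0 < w) : muEx w = w * Real.log (-w) := if_neg h

/-- The key nonnegativity statement. -/
lemma muEx_sol_nonneg (τ : ℝ) (w : ℝ → ℝ)
    (hw0 : w 0 = 0)
    (hderiv : ∀ t ∈ Set.Ico (0 : ℝ) τ, HasDerivAt w (-muEx (w t)) t) :
    ∀ t ∈ Set.Ico (0 : ℝ) τ, 0 ≤ w t := by
  intro t₁ ht₁
  by_contra hcon
  push_neg at hcon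
  have h0t₁ : (0 : ℝ) ≤ t₁ := ht₁.1
  have ht₁τ : t₁ < τ := ht₁.2
  -- continuity of w on [0, τ)
  have hwc : ∀ t ∈ Set.Ico (0 : ℝ) τ, ContinuousAt w t :=
    fun t ht => (hderiv t ht).continuousAt
  have hsubτ : Set.Icc (0 : ℝ) t₁ ⊆ Set.Ico 0 τ := fun u hu => ⟨hu.1, lt_of_le_of_lt hu.2 ht₁τ⟩
  have hwcon : ContinuousOn w (Set.Icc (0 : ℝ) t₁) :=
    fun u hu => (hwc u (hsubτ hu)).continuousWithinAt
  -- the last zero of w before t₁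
  set S : Set ℝ := Set.Icc (0 : ℝ) t₁ ∩ w ⁻¹' {0} with hS
  have hSclosed : IsClosed S :=
    hwcon.preimage_isClosed_of_isClosed isClosed_Icc isClosed_singleton
  have hSne : S.Nonempty := ⟨0, ⟨le_refl 0, h0t₁⟩, by simpa using hw0⟩
  have hSbdd : BddAbove S := ⟨t₁, fun u hu => hu.1.2⟩
  set t₀ : ℝ := sSup S with ht₀def
  have ht₀S : t₀ ∈ S := hSclosed.csSup_mem hSne hSbdd
  have ht₀0 : (0 : ℝ) ≤ t₀ := ht₀S.1.1
  have hwt₀ : w t₀ = 0 := ht₀S.2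
  have ht₀t₁ : t₀ < t₁ := lt_of_le_of_ne ht₀S.1.2 (by
    intro h; rw [h] at hwt₀; exact absurd hwt₀ (ne_of_lt hcon))
  have hsub : Set.Ioc t₀ t₁ ⊆ Set.Ico 0 τ :=
    fun u hu => ⟨le_trans ht₀0 hu.1.le, lt_of_le_of_lt hu.2 ht₁τ⟩
  -- w is negative on (t₀, t₁]
  have hwneg : ∀ t ∈ Set.Ioc t₀ t₁, w t < 0 := by
    intro t ht
    rcases lt_trichotomy (w t) 0 with h | h | h
    · exact h
    · exact absurd (le_csSup hSbdd (⟨⟨le_trans ht₀0 ht.1.le, ht.2⟩, by simpa using h⟩ : t ∈ S))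
        (not_le.2 ht.1)
    · -- IVT gives a zero in [t, t₁], contradicting sSup
      have hcont' : ContinuousOn w (Set.Icc t t₁) :=
        hwcon.mono (fun u hu => ⟨le_trans (le_trans ht₀0 ht.1.le) hu.1, hu.2⟩)
      have h0mem : (0 : ℝ) ∈ Set.Icc (w t₁) (w t) := ⟨hcon.le, h.le⟩
      obtain ⟨s, hs, hws⟩ := intermediate_value_Icc' ht.2 hcont' h0mem
      have hsS : s ∈ S := ⟨⟨le_trans (le_trans ht₀0 ht.1.le) hs.1, hs.2⟩, hws⟩
      exact absurd (le_csSup hSbdd hsS) (not_le.2 (lt_of_lt_of_le ht.1 hs.1))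
  -- the function g u = exp u * log (-w u) has zero derivative on (t₀, t₁]
  set g : ℝ → ℝ := fun u => Real.exp u * Real.log (-w u) with hg
  have hgderiv : ∀ u ∈ Set.Ioc t₀ t₁, HasDerivAt g 0 u := by
    intro u hu
    have hwu : w u < 0 := hwneg u hu
    have hwu' : -w u ≠ 0 := ne_of_gt (by linarith : (0:ℝ) < -w u)
    have hd : HasDerivAt w (-muEx (w u)) u := hderiv u (hsub hu)
    have hinner : HasDerivAt (fun x => -w x) (muEx (w u)) u := by
      simpa using hd.fun_neg
    have hlog : HasDerivAt (fun x => Real.log (-w x)) (muEx (w u) / (-w u)) u :=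
      hinner.log hwu'
    have hval : muEx (w u) / (-w u) = -Real.log (-w u) := by
      rw [muEx_of_nonpos (not_lt.2 hwu.le)]
      field_simp
      rw [mul_comm (w u) (Real.log (-w u)), mul_div_cancel_right₀ _ hwu.ne]
    rw [hval] at hlog
    have : HasDerivAt g (Real.exp u * Real.log (-w u) + Real.exp u * -Real.log (-w u)) u :=
      (Real.hasDerivAt_exp u).fun_mul hlog
    convert this using 1
    ring
  -- hence g is constant on (t₀, t₁]
  have hgconst : ∀ t ∈ Set.Ioc t₀ t₁, g t = g t₁ := by
    intro t ht
    have hsub2 : Set.Icc t t₁ ⊆ Set.Ioc t₀ t₁ :=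
      fun u hu => ⟨lt_of_lt_of_le ht.1 hu.1, hu.2⟩
    have hcontg : ContinuousOn g (Set.Icc t t₁) :=
      fun u hu => ((hgderiv u (hsub2 hu)).continuousAt).continuousWithinAt
    have hdg : ∀ u ∈ Set.Ico t t₁, HasDerivWithinAt g 0 (Set.Ici u) u :=
      fun u hu => (hgderiv u ⟨lt_of_lt_of_le ht.1 hu.1, hu.2.le⟩).hasDerivWithinAt
    have := constant_of_has_deriv_right_zero hcontg hdg t₁ ⟨ht.2, le_refl t₁⟩
    exact this.symm
  -- so log(-w t) = g t₁ / exp t is bounded below on (t₀, t₁]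
  set C : ℝ := g t₁ with hC
  set B : ℝ := -(|C| / Real.exp t₀) with hB
  have hlb : ∀ t ∈ Set.Ioc t₀ t₁, Real.exp B ≤ -w t := by
    intro t ht
    have hgt : Real.exp t * Real.log (-w t) = C := hgconst t ht
    have hlogval : Real.log (-w t) = C / Real.exp t := by
      field_simp at hgt ⊢
      linarith [hgt]
    have hlogB : B ≤ Real.log (-w t) := by
      rw [hlogval, hB]
      have h1 : Real.exp t₀ ≤ Real.exp t := Real.exp_le_exp.2 ht.1.le
      have h2 : |C| / Real.exp t ≤ |C| / Real.exp t₀ := by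
        gcongr <;> first | exact abs_nonneg C | exact Real.exp_pos t₀ | exact h1
      have h3 : -(|C| / Real.exp t) ≤ C / Real.exp t := by
        rw [← neg_div, div_le_div_iff_of_pos_right (Real.exp_pos t)]
        exact neg_abs_le C
      linarith
    calc Real.exp B ≤ Real.exp (Real.log (-w t)) := Real.exp_le_exp.2 hlogB
      _ = -w t := Real.exp_log (by linarith [hwneg t ht])
  -- but w is continuous at t₀ with w t₀ = 0, contradiction
  have hct₀ : ContinuousAt w t₀ := hwc t₀ ⟨ht₀0, lt_of_le_of_lt ht₀S.1.2 ht₁τ⟩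
  have hev : ∀ᶠ u in nhds t₀, w u ∈ Set.Ioo (-Real.exp B) (Real.exp B) := by
    apply hct₀.preimage_mem_nhds
    rw [hwt₀]
    exact Ioo_mem_nhds (neg_lt_zero.2 (Real.exp_pos B)) (Real.exp_pos B)
  have hev' : ∀ᶠ u in nhdsWithin t₀ (Set.Ioi t₀),
      w u ∈ Set.Ioo (-Real.exp B) (Real.exp B) := hev.filter_mono nhdsWithin_le_nhds
  have hmem : Set.Ioc t₀ t₁ ∈ nhdsWithin t₀ (Set.Ioi t₀) :=
    Ioc_mem_nhdsGT_of_mem ⟨le_refl t₀, ht₀t₁⟩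
  obtain ⟨u, hu1, hu2⟩ := (hev'.and hmem).exists
  have := hlb u hu2
  have : Real.exp B ≤ -w u := this
  linarith [hu1.1]

/-- Example 3: `μ` is continuous on `(−1,1)`, it is a minimal function on
`(−1,1)` (every solution of `ẇ = −μ(w)`, `w(0) = 0`, staying in `(−1,1)` remains
nonnegative), and `μ` is not locally Lipschitz at `0`. -/
theorem muEx_minimal_not_locallyLipschitz :
    ContinuousOn muEx (Set.Ioo (-1 : ℝ) 1) ∧
    (∀ (τ : ℝ) (w : ℝ → ℝ),
      (∀ t ∈ Set.Ico (0 : ℝ) τ, w t ∈ Set.Ioo (-1 : ℝ) 1) →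
      w 0 = 0 →
      (∀ t ∈ Set.Ico (0 : ℝ) τ, HasDerivAt w (-muEx (w t)) t) →
      ∀ t ∈ Set.Ico (0 : ℝ) τ, 0 ≤ w t) ∧
    ¬ ∃ K : NNReal, ∃ s ∈ nhds (0 : ℝ), s ⊆ Set.Ioo (-1 : ℝ) 1 ∧
      LipschitzOnWith K muEx s := by
  refine ⟨?_, ?_, ?_⟩
  · rw [muEx_eq_negMulLog]
    exact (Real.continuous_negMulLog.comp continuous_abs).continuousOn
  · intro τ w _ hw0 hderiv
    exact muEx_sol_nonneg τ w hw0 hderiv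
  · rintro ⟨K, s, hs, _, hlip⟩
    obtain ⟨ε, hε, hball⟩ := Metric.mem_nhds_iff.1 hs
    set x : ℝ := min (ε / 2) (Real.exp (-(K + 1))) with hxdef
    have hx0 : 0 < x := lt_min (by linarith) (Real.exp_pos _)
    have hxε : x < ε := lt_of_le_of_lt (min_le_left _ _) (by linarith)
    have hxs : x ∈ s := hball (by
      simp only [Metric.mem_ball, Real.dist_eq, sub_zero, abs_of_pos hx0]
      exact hxε)
    have h0s : (0 : ℝ) ∈ s := mem_of_mem_nhds hs
    have hdist := hlip.dist_le_mul x hxs 0 h0s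
    rw [muEx_zero, muEx_of_pos hx0, Real.dist_eq, Real.dist_eq, sub_zero, sub_zero] at hdist
    have hK : (0:ℝ) ≤ (K : ℝ) := K.2
    have hlogx : Real.log x ≤ -(K + 1) := by
      calc Real.log x ≤ Real.log (Real.exp (-(K + 1))) :=
            Real.log_le_log hx0 (min_le_right _ _)
        _ = -(K + 1) := Real.log_exp _
    have habs : |(-x) * Real.log x| = x * (-Real.log x) := by
      rw [abs_mul, abs_neg, abs_of_pos hx0, abs_of_nonpos (by linarith : Real.log x ≤ 0)]
    rw [habs, abs_of_pos hx0] at hdist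
    have : -Real.log x ≤ K := by
      have := le_of_mul_le_mul_left (by linarith [hdist] : x * (-Real.log x) ≤ x * K) hx0
      linarith
    linarith
end
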